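/- arXiv:1403.5741 — 6 statements merged into one kernel-verified Lean document; each statement's English description precedes it below -/
import Mathlib

section
/- Let E be a locally convex space and c : ℝ → E a locally Lipschitz curve. Then for any convergent sequence of real numbers (t_n) with limit a, the sequence (c(t_n)) Mackey-converges to c(a), i.e., there exist an absolutely convex bounded set B ⊆ E and a sequence (μ_n) of reals converging to 0 with c(t_n) - c(a) ∈ μ_n B for all n. -/
open Filter Topology Set Bornology Pointwise

universe u v

/-- Gâteaux derivative of `Φ` at `x` in direction `v`, with value `w`. -/
def HasGDerivAt {E : Type u} {F : Type v} [AddCommGroup E] [Module ℝ E]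
    [AddCommGroup F] [Module ℝ F] [TopologicalSpace F]
    (Φ : E → F) (x v : E) (w : F) : Prop :=
  Tendsto (fun t : ℝ => t⁻¹ • (Φ (x + t • v) - Φ x)) (𝓝[≠] (0 : ℝ)) (𝓝 w)

/-- Derivative of a curve `c : ℝ → E` at `t`, with value `v`. -/
def CurveDerivAt {E : Type u} [AddCommGroup E] [Module ℝ E] [TopologicalSpace E]
    (c : ℝ → E) (v : E) (t : ℝ) : Prop :=
  Tendsto (fun h : ℝ => h⁻¹ • (c (t + h) - c t)) (𝓝[≠] (0 : ℝ)) (𝓝 v)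

/-- The curve `c` is of class `C^k`: derivatives up to order `k` exist and are continuous. -/
def IsCkCurve {E : Type u} [AddCommGroup E] [Module ℝ E] [TopologicalSpace E]
    (k : ℕ) (c : ℝ → E) : Prop :=
  ∃ D : ℕ → ℝ → E, D 0 = c ∧ (∀ n < k, ∀ t, CurveDerivAt (D n) (D (n + 1) t) t) ∧
    ∀ n ≤ k, Continuous (D n)

/-- The curve `c` is smooth (`C^∞`): all iterated derivatives exist and are continuous. -/
def IsSmoothCurve {E : Type u} [AddCommGroup E] [Module ℝ E] [TopologicalSpace E]
    (c : ℝ → E) : Prop :=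
  ∃ D : ℕ → ℝ → E, D 0 = c ∧ (∀ n, ∀ t, CurveDerivAt (D n) (D (n + 1) t) t) ∧
    ∀ n, Continuous (D n)

/-- The set of difference quotients of `c` over `J`. -/
def DiffQuotients {E : Type u} [AddCommGroup E] [Module ℝ E]
    (c : ℝ → E) (J : Set ℝ) : Set E :=
  {x | ∃ t₁ ∈ J, ∃ t₂ ∈ J, t₁ ≠ t₂ ∧ x = (t₂ - t₁)⁻¹ • (c t₂ - c t₁)}

/-- `c` is Lipschitz on `J`: its set of difference quotients over `J` is bounded. -/
def LipschitzOnSet {E : Type u} [AddCommGroup E] [Module ℝ E] [TopologicalSpace E]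
    (c : ℝ → E) (J : Set ℝ) : Prop :=
  IsVonNBounded ℝ (DiffQuotients c J)

/-- `c` is locally Lipschitz: every real has a neighborhood on which `c` is Lipschitz. -/
def LocallyLipschitzCurve {E : Type u} [AddCommGroup E] [Module ℝ E] [TopologicalSpace E]
    (c : ℝ → E) : Prop :=
  ∀ t : ℝ, ∃ J ∈ 𝓝 t, LipschitzOnSet c J

/-- `c` is of class `Lip^k`: derivatives up to order `k` exist and the `k`-th one is
locally Lipschitz. -/
def IsLipkCurve {E : Type u} [AddCommGroup E] [Module ℝ E] [TopologicalSpace E]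
    (k : ℕ) (c : ℝ → E) : Prop :=
  ∃ D : ℕ → ℝ → E, D 0 = c ∧ (∀ n < k, ∀ t, CurveDerivAt (D n) (D (n + 1) t) t) ∧
    LocallyLipschitzCurve (D k)

/-- A set is absolutely convex if it is convex and balanced. -/
def AbsolutelyConvex {E : Type u} [AddCommGroup E] [Module ℝ E] (B : Set E) : Prop :=
  Convex ℝ B ∧ Balanced ℝ B

/-- A sequence `x` Mackey-converges to `l`. -/
def MackeyConvSeq {E : Type u} [AddCommGroup E] [Module ℝ E] [TopologicalSpace E]
    (x : ℕ → E) (l : E) : Prop :=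
  ∃ B : Set E, AbsolutelyConvex B ∧ IsVonNBounded ℝ B ∧
    ∃ μ : ℕ → ℝ, Tendsto μ atTop (𝓝 (0 : ℝ)) ∧ ∀ n, x n - l ∈ μ n • B

/-- `E` is Mackey-complete: every Mackey-Cauchy net converges. -/
def MackeyComplete (E : Type u) [AddCommGroup E] [Module ℝ E] [TopologicalSpace E] : Prop :=
  ∀ (ι : Type) [Nonempty ι] [SemilatticeSup ι] (x : ι → E),
    (∃ B : Set E, AbsolutelyConvex B ∧ IsVonNBounded ℝ B ∧
      ∃ μ : ι × ι → ℝ, Tendsto μ atTop (𝓝 (0 : ℝ)) ∧ ∀ i j, x i - x j ∈ μ (i, j) • B) →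
    ∃ l, Tendsto x atTop (𝓝 l)

/-- The Mackey-closure (`c^∞`) topology: the finest topology on `E` making all smooth
curves `ℝ → E` continuous. -/
def cInfTopology (E : Type u) [AddCommGroup E] [Module ℝ E] [TopologicalSpace E] :
    TopologicalSpace E :=
  ⨆ c : {c : ℝ → E // IsSmoothCurve c}, TopologicalSpace.coinduced c.1 inferInstance

/-- `Φ` is conveniently smooth on `U`: it sends smooth curves into `U` to smooth curves. -/
def ConvSmoothOn {E : Type u} {F : Type v} [AddCommGroup E] [Module ℝ E] [TopologicalSpace E]
    [AddCommGroup F] [Module ℝ F] [TopologicalSpace F]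
    (Φ : E → F) (U : Set E) : Prop :=
  ∀ c : ℝ → E, IsSmoothCurve c → (∀ t, c t ∈ U) → IsSmoothCurve (Φ ∘ c)

/-- Bastiani `C^k` maps: `C^0` means continuous on `U`; `C^{k+1}` means the Gâteaux
differential exists on `U × E` and is `C^k` there. -/
def IsCBastOn (F : Type v) [AddCommGroup F] [Module ℝ F] [TopologicalSpace F] :
    (k : ℕ) → (E : Type u) → [AddCommGroup E] → [Module ℝ E] → [TopologicalSpace E] →
      (E → F) → Set E → Prop
  | 0, _, _, _, _, Φ, U => ContinuousOn Φ U
  | k + 1, E, iA, iM, iT, Φ, U =>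
      letI : AddCommGroup E := iA
      letI : Module ℝ E := iM
      letI : TopologicalSpace E := iT
      ∃ D : E × E → F, (∀ x ∈ U, ∀ v, HasGDerivAt Φ x v (D (x, v))) ∧
        IsCBastOn F k (E × E) D (U ×ˢ (Set.univ : Set E))

/-- `Φ` is smooth on `U` in the sense of Bastiani. -/
def BastSmoothOn {E : Type u} {F : Type v} [AddCommGroup E] [Module ℝ E] [TopologicalSpace E]
    [AddCommGroup F] [Module ℝ F] [TopologicalSpace F]
    (Φ : E → F) (U : Set E) : Prop :=
  ∀ k : ℕ, IsCBastOn F k E Φ U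

/-- The absolutely convex hull of the closure of `A`. -/
def absConvexHullOfClosure {E : Type u} [AddCommGroup E] [Module ℝ E] [TopologicalSpace E]
    (A : Set E) : Set E :=
  ⋂₀ {t | closure A ⊆ t ∧ AbsolutelyConvex t}


/-- In a locally convex space, the absolutely convex hull of a von Neumann bounded set
is von Neumann bounded. -/
theorem isVonNBounded_absConvexHull_aux {E : Type*} [AddCommGroup E] [Module ℝ E]
    [TopologicalSpace E] [IsTopologicalAddGroup E] [ContinuousSMul ℝ E]
    [LocallyConvexSpace ℝ E] {S : Set E} (hS : IsVonNBounded ℝ S) :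
    IsVonNBounded ℝ (absConvexHull ℝ S) := by
  intro V hV
  obtain ⟨W, ⟨hW0, hWac⟩, hWV⟩ := (nhds_hasBasis_absConvex ℝ E).mem_iff.mp hV
  have habs : Absorbs ℝ W S := hS hW0
  filter_upwards [habs] with r hr
  calc absConvexHull ℝ S ⊆ r • W := absConvexHull_min hr ⟨hWac.1.smul r, hWac.2.smul r⟩
    _ ⊆ r • V := smul_set_mono hWV

theorem locallyLipschitz_preserves_mackey_convergence {E : Type*} [AddCommGroup E] [Module ℝ E] [TopologicalSpace E]
    [IsTopologicalAddGroup E] [ContinuousSMul ℝ E] [LocallyConvexSpace ℝ E] [T2Space E]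
    (c : ℝ → E) (hc : LocallyLipschitzCurve c) (t : ℕ → ℝ) (a : ℝ)
    (ht : Filter.Tendsto t Filter.atTop (nhds a)) :
    MackeyConvSeq (fun n => c (t n)) (c a) := by
  obtain ⟨J, hJ, hLip⟩ := hc a
  have haJ : a ∈ J := mem_of_mem_nhds hJ
  obtain ⟨N, hN⟩ := eventually_atTop.mp (ht.eventually hJ)
  set S : Set E := DiffQuotients c J ∪ ((⋃ n ∈ Set.Iio N, {c (t n) - c a}) ∪ {0}) with hS
  have hSbdd : IsVonNBounded ℝ S := by
    refine hLip.union (IsVonNBounded.union ?_ (isVonNBounded_singleton 0))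
    exact (isVonNBounded_biUnion (Set.finite_Iio N)).mpr fun n _ => isVonNBounded_singleton _ -- (Set.finite_Iio N) fun n _ => isVonNBounded_singleton _
  refine ⟨absConvexHull ℝ S, ⟨convex_absConvexHull, balanced_absConvexHull⟩,
    isVonNBounded_absConvexHull_aux hSbdd,
    fun n => if n < N then 1 else t n - a, ?_, ?_⟩
  · refine Tendsto.congr' ?_ ((ht.sub_const a).congr (fun n => rfl) |>.trans ?_)
    · filter_upwards [eventually_ge_atTop N] with n hn
      simp [Nat.not_lt.mpr hn]
    · simp [sub_self]
  · intro n
    by_cases hn : n < N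
    · simp only [hn, if_pos]
      rw [one_smul]
      exact subset_absConvexHull (Or.inr (Or.inl (Set.mem_biUnion hn rfl)))
    · simp only [hn, if_neg, not_false_iff]
      push_neg at hn
      have htJ : t n ∈ J := hN n hn
      by_cases hta : t n = a
      · rw [hta, sub_self, sub_self]
        have h0 : (0 : E) ∈ absConvexHull ℝ S :=
          subset_absConvexHull (Or.inr (Or.inr rfl))
        simpa using Set.smul_mem_smul_set (a := (0 : ℝ)) h0
      · have hq : (t n - a)⁻¹ • (c (t n) - c a) ∈ S :=
          Or.inl ⟨a, haJ, t n, htJ, fun h => hta h.symm, rfl⟩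
        have : (t n - a) • ((t n - a)⁻¹ • (c (t n) - c a)) ∈
            (t n - a) • absConvexHull ℝ S :=
          Set.smul_mem_smul_set (subset_absConvexHull hq)
        rwa [smul_inv_smul₀ (sub_ne_zero.mpr hta)] at this
end

section
/- Let E be a locally convex space, (x_n)_{n≥1} a sequence in E and x ∈ E. If (x_n) converges fast to x, then there exists a smooth curve c : ℝ → E with c(1/n) = x_n for every n ≥ 1 and c(0) = x. -/
open Filter Topology Set Bornology Pointwise

universe u v

/-! ### Auxiliary constructions for the special curve lemma -/

noncomputable def sclBump : ContDiffBump (0:ℝ) := ⟨1/2, 1, by norm_num, by norm_num⟩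

noncomputable def Phi (k : ℕ) : ℝ → ℝ := iteratedDeriv k (⇑sclBump)

lemma contDiff_sclBump : ContDiff ℝ ((⊤:ℕ∞) : WithTop ℕ∞) (⇑sclBump) := sclBump.contDiff

lemma diff_Phi (k : ℕ) : Differentiable ℝ (Phi k) :=
  contDiff_sclBump.differentiable_iteratedDeriv k
    (by exact_mod_cast WithTop.coe_lt_coe.mpr (WithTop.coe_lt_top k))

lemma hasDerivAt_Phi (k : ℕ) (t : ℝ) : HasDerivAt (Phi k) (Phi (k+1) t) t := by
  have h := (diff_Phi k t).hasDerivAt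
  rwa [show deriv (Phi k) t = Phi (k+1) t from by
    rw [Phi, Phi, iteratedDeriv_succ]] at h

lemma tsupport_Phi (k : ℕ) : tsupport (Phi k) ⊆ Metric.closedBall 0 1 := by
  induction k with
  | zero =>
    rw [Phi, iteratedDeriv_zero, sclBump.tsupport_eq]
    simp [sclBump]
  | succ n ih =>
    rw [Phi, iteratedDeriv_succ]
    exact (closure_minimal support_deriv_subset (isClosed_tsupport _)).trans ih

lemma Phi_eq_zero {k : ℕ} {u : ℝ} (h : 1 < |u|) : Phi k u = 0 := by
  apply image_eq_zero_of_notMem_tsupport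
  intro hmem
  have := tsupport_Phi k hmem
  simp only [Metric.mem_closedBall, Real.dist_eq, sub_zero] at this
  linarith

lemma Phi_zero_eq_one : Phi 0 0 = 1 := by
  rw [Phi, iteratedDeriv_zero]
  exact sclBump.one_of_mem_closedBall (by norm_num [sclBump])

lemma exists_bound_Phi (k : ℕ) : ∃ M : ℝ, 0 < M ∧ ∀ u, |Phi k u| ≤ M := by
  obtain ⟨C, hC⟩ := (isCompact_Icc (a := (-1:ℝ)) (b := 1)).exists_bound_of_continuousOn
    ((diff_Phi k).continuous.continuousOn)
  refine ⟨max C 1, by positivity, fun u => ?_⟩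
  rcases le_or_gt (|u|) 1 with h | h
  · exact (hC u (abs_le.mp h)).trans (le_max_left _ _)
  · rw [Phi_eq_zero h]
    simp only [abs_zero]
    exact le_trans zero_le_one (le_max_right C 1)

noncomputable def psi (k m : ℕ) (t : ℝ) : ℝ :=
  (8*(m:ℝ)^2)^k * Phi k ((8*(m:ℝ)^2) * (t - 1/m))

lemma hasDerivAt_psi (k m : ℕ) (t : ℝ) : HasDerivAt (psi k m) (psi (k+1) m t) t := by
  have h1 : HasDerivAt (fun s : ℝ => (8*(m:ℝ)^2) * (s - 1/m)) (8*(m:ℝ)^2) t := by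
    simpa using ((hasDerivAt_id t).sub_const (1/(m:ℝ))).const_mul (8*(m:ℝ)^2)
  have h2 := (hasDerivAt_Phi k ((8*(m:ℝ)^2) * (t - 1/m))).comp t h1
  have h3 := h2.const_mul ((8*(m:ℝ)^2)^k)
  have : (8*(m:ℝ)^2)^k * (Phi (k+1) ((8*(m:ℝ)^2) * (t - 1/m)) * (8*(m:ℝ)^2))
      = psi (k+1) m t := by rw [psi]; ring
  rw [this] at h3
  exact h3

lemma psi_eq_zero {k m : ℕ} {t : ℝ} (hm : 1 ≤ m) (h : 1/(8*(m:ℝ)^2) < |t - 1/m|) :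
    psi k m t = 0 := by
  have hm' : (1:ℝ) ≤ m := by exact_mod_cast hm
  have hpos : (0:ℝ) < 8*(m:ℝ)^2 := by positivity
  have : 1 < |(8*(m:ℝ)^2) * (t - 1/m)| := by
    rw [abs_mul, abs_of_pos hpos]
    rw [div_lt_iff₀ hpos] at h
    nlinarith [abs_nonneg (t - 1/(m:ℝ))]
  rw [psi, Phi_eq_zero this, mul_zero]

lemma insupp_of_psi_ne_zero {k m : ℕ} {t : ℝ} (hm : 1 ≤ m) (h : psi k m t ≠ 0) :
    |t - 1/m| ≤ 1/(8*(m:ℝ)^2) := by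
  by_contra hc
  exact h (psi_eq_zero hm (lt_of_not_ge hc))

lemma psi_bound (k m : ℕ) (t : ℝ) {M : ℝ} (hb : ∀ u, |Phi k u| ≤ M) :
    |psi k m t| ≤ (8*(m:ℝ)^2)^k * M := by
  rw [psi, abs_mul, abs_of_nonneg (show (0:ℝ) ≤ (8*(m:ℝ)^2)^k by positivity)]
  exact mul_le_mul_of_nonneg_left (hb _) (by positivity)

lemma psi_at_center (m : ℕ) : psi 0 m (1/(m:ℝ)) = 1 := by
  rw [psi, pow_zero, one_mul, sub_self, mul_zero, Phi_zero_eq_one]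

lemma supp_unique_aux {m n : ℕ} (hm : 1 ≤ m) (hlt : m < n) {t : ℝ}
    (h1 : |t - 1/m| ≤ 1/(8*(m:ℝ)^2)) (h2 : |t - 1/n| ≤ 1/(8*(n:ℝ)^2)) : False := by
  have ha : (1:ℝ) ≤ m := by exact_mod_cast hm
  have hba : ((m:ℝ)+1) ≤ n := by exact_mod_cast hlt
  have ha0 : (0:ℝ) < m := by linarith
  have hb0 : (0:ℝ) < n := by linarith
  have g1 : 1/(8*(n:ℝ)^2) ≤ 1/(8*(m:ℝ)^2) :=
    one_div_le_one_div_of_le (by positivity) (by nlinarith)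
  have g2 : 1/(n:ℝ) ≤ 1/((m:ℝ)+1) := one_div_le_one_div_of_le (by linarith) hba
  have g3 : 1/(m:ℝ) - 1/((m:ℝ)+1) = 1/((m:ℝ)*((m:ℝ)+1)) := by
    field_simp
    ring
  have g4 : 1/(4*(m:ℝ)^2) < 1/((m:ℝ)*((m:ℝ)+1)) :=
    one_div_lt_one_div_of_lt (by positivity) (by nlinarith)
  have e1 := abs_le.mp h1
  have e2 := abs_le.mp h2
  have : 1/(8*(m:ℝ)^2) + 1/(8*(m:ℝ)^2) = 1/(4*(m:ℝ)^2) := by ring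
  linarith

lemma supp_unique {m n : ℕ} (hm : 1 ≤ m) (hn : 1 ≤ n) {t : ℝ}
    (h1 : |t - 1/m| ≤ 1/(8*(m:ℝ)^2)) (h2 : |t - 1/n| ≤ 1/(8*(n:ℝ)^2)) : m = n := by
  rcases lt_trichotomy m n with h | h | h
  · exact absurd (supp_unique_aux hm h h1 h2) not_false
  · exact h
  · exact absurd (supp_unique_aux hn h h2 h1) not_false

lemma supp_pos {m : ℕ} {t : ℝ} (hm : 1 ≤ m) (h : |t - 1/m| ≤ 1/(8*(m:ℝ)^2)) :
    1/(2*(m:ℝ)) ≤ t ∧ t ≤ 2/m := by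
  have ha : (1:ℝ) ≤ m := by exact_mod_cast hm
  have ha0 : (0:ℝ) < m := by linarith
  have e1 := abs_le.mp h
  have k1 : 1/(2*(m:ℝ)) + 1/(8*(m:ℝ)^2) ≤ 1/(m:ℝ) := by
    rw [div_add_div _ _ (by positivity) (by positivity), div_le_div_iff₀ (by positivity) ha0]
    ring_nf
    nlinarith
  have k2 : 1/(m:ℝ) + 1/(8*(m:ℝ)^2) ≤ 2/(m:ℝ) := by
    rw [div_add_div _ _ (by positivity) (by positivity), div_le_div_iff₀ (by positivity) ha0]
    ring_nf
    nlinarith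
  constructor <;> linarith

section Toolkit
variable {E : Type*} [AddCommGroup E] [Module ℝ E] [TopologicalSpace E]
  [IsTopologicalAddGroup E] [ContinuousSMul ℝ E] {t : ℝ}

omit [IsTopologicalAddGroup E] [ContinuousSMul ℝ E] in
lemma curveDerivAt_const (a : E) (t : ℝ) : CurveDerivAt (fun _ => a) 0 t := by
  unfold CurveDerivAt
  simp only [sub_self, smul_zero]
  exact tendsto_const_nhds

omit [IsTopologicalAddGroup E] [ContinuousSMul ℝ E] in
lemma CurveDerivAt.const_add (a : E) {f : ℝ → E} {v : E}
    (hf : CurveDerivAt f v t) : CurveDerivAt (fun s => a + f s) v t := by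
  unfold CurveDerivAt at *
  simpa using hf

lemma tendsto_add_nhdsNE (t : ℝ) :
    Tendsto (fun h : ℝ => t + h) (𝓝[≠] (0:ℝ)) (𝓝[≠] t) := by
  rw [tendsto_nhdsWithin_iff]
  constructor
  · have h0 : Tendsto (fun h : ℝ => t + h) (𝓝 (0:ℝ)) (𝓝 (t + 0)) :=
      (continuous_const.add continuous_id).tendsto 0
    rw [add_zero] at h0
    exact h0.mono_left nhdsWithin_le_nhds
  · filter_upwards [self_mem_nhdsWithin] with h hh
    simpa using hh

lemma curveDerivAt_smul {f : ℝ → ℝ} {f' : ℝ} (v : E)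
    (hf : HasDerivAt f f' t) : CurveDerivAt (fun s => f s • v) (f' • v) t := by
  have hslope := hasDerivAt_iff_tendsto_slope.mp hf
  have h2 : Tendsto (fun h : ℝ => h⁻¹ * (f (t + h) - f t)) (𝓝[≠] (0:ℝ)) (𝓝 f') := by
    have := hslope.comp (tendsto_add_nhdsNE t)
    refine this.congr fun h => ?_
    simp [slope_def_field, div_eq_inv_mul]
  unfold CurveDerivAt
  have := h2.smul_const v
  refine this.congr fun h => ?_
  rw [← sub_smul, smul_smul]

omit [ContinuousSMul ℝ E] in
lemma curveDerivAt_finset_sum {ι : Type*} (F : Finset ι) {f : ι → ℝ → E} {v : ι → E}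
    (h : ∀ i ∈ F, CurveDerivAt (f i) (v i) t) :
    CurveDerivAt (fun s => ∑ i ∈ F, f i s) (∑ i ∈ F, v i) t := by
  unfold CurveDerivAt at *
  have := tendsto_finset_sum F h
  refine this.congr fun h => ?_
  rw [← Finset.sum_sub_distrib, Finset.smul_sum]

omit [IsTopologicalAddGroup E] [ContinuousSMul ℝ E] in
lemma CurveDerivAt.congr_nhds {f g : ℝ → E} {v : E}
    (hfg : f =ᶠ[𝓝 t] g) (hg : CurveDerivAt g v t) : CurveDerivAt f v t := by
  unfold CurveDerivAt at *
  refine hg.congr' ?_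
  have h1 : ∀ᶠ h in 𝓝[≠] (0:ℝ), f (t + h) = g (t + h) := by
    have : Tendsto (fun h : ℝ => t + h) (𝓝[≠] (0:ℝ)) (𝓝 t) :=
      (tendsto_add_nhdsNE t).mono_right nhdsWithin_le_nhds
    exact this.eventually hfg
  filter_upwards [h1] with h hh
  rw [hh, hfg.eq_of_nhds]

lemma CurveDerivAt.continuousAt {c : ℝ → E} {v : E}
    (h : CurveDerivAt c v t) : ContinuousAt c t := by
  have key : Tendsto (fun h : ℝ => c (t + h)) (𝓝 (0:ℝ)) (𝓝 (c t)) := by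
    rw [← nhdsNE_sup_pure (0:ℝ), tendsto_sup]
    constructor
    · have h2 : Tendsto (fun h : ℝ => c t + h • (h⁻¹ • (c (t + h) - c t)))
          (𝓝[≠] (0:ℝ)) (𝓝 (c t + (0:ℝ) • v)) :=
        tendsto_const_nhds.add ((tendsto_id.mono_left nhdsWithin_le_nhds).smul h)
      rw [zero_smul, add_zero] at h2
      refine h2.congr' ?_
      filter_upwards [self_mem_nhdsWithin] with h hh
      have : h ≠ 0 := by simpa using hh
      rw [smul_inv_smul₀ this]
      abel
    · simpa using tendsto_pure_nhds (fun h : ℝ => c (t + h)) 0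
  have : Tendsto (fun s : ℝ => c (t + (s - t))) (𝓝 t) (𝓝 (c t)) := by
    refine key.comp ?_
    have h0 : Tendsto (fun s : ℝ => s - t) (𝓝 t) (𝓝 (t - t)) :=
      (continuous_id.sub continuous_const).tendsto t
    rwa [sub_self] at h0
  simpa [ContinuousAt] using this
end Toolkit

section Curve
variable {E : Type*} [AddCommGroup E] [Module ℝ E] [TopologicalSpace E]
  [IsTopologicalAddGroup E] [ContinuousSMul ℝ E] [T2Space E]

variable (x : ℕ → E) (l : E)

noncomputable def Scurve (k : ℕ) (t : ℝ) : E :=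
  ∑' n : ℕ, psi k (n+1) t • (x (n+1) - l)

noncomputable def Dcurve (k : ℕ) (t : ℝ) : E :=
  (if k = 0 then l else 0) + Scurve x l k t

omit [IsTopologicalAddGroup E] [ContinuousSMul ℝ E] [T2Space E] in
lemma Scurve_single {m : ℕ} (hm : 1 ≤ m) {t : ℝ} (h : |t - 1/m| ≤ 1/(8*(m:ℝ)^2)) (k : ℕ) :
    Scurve x l k t = psi k m t • (x m - l) := by
  have hv : ∀ n : ℕ, n ≠ m - 1 → psi k (n+1) t • (x (n+1) - l) = (0:E) := by
    intro n hn
    rcases eq_or_ne (psi k (n+1) t) 0 with h0 | h0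
    · rw [h0, zero_smul]
    · have hsupp := insupp_of_psi_ne_zero (Nat.succ_le_succ (Nat.zero_le n)) h0
      have := supp_unique (Nat.succ_le_succ (Nat.zero_le n)) hm hsupp h
      exact (hn (by omega)).elim
  rw [Scurve, tsum_eq_single (m-1) hv, Nat.sub_add_cancel hm]

omit [IsTopologicalAddGroup E] [ContinuousSMul ℝ E] [T2Space E] in
lemma Scurve_of_no_supp {t : ℝ} (h : ∀ m : ℕ, 1 ≤ m → 1/(8*(m:ℝ)^2) < |t - 1/m|) (k : ℕ) :
    Scurve x l k t = 0 := by
  rw [Scurve]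
  convert tsum_zero with n
  rw [psi_eq_zero (Nat.succ_le_succ (Nat.zero_le n)) (h (n+1) (Nat.succ_le_succ (Nat.zero_le n))),
    zero_smul]

omit [IsTopologicalAddGroup E] [ContinuousSMul ℝ E] [T2Space E] in
lemma Scurve_at_nonpos {t : ℝ} (ht : t ≤ 0) (k : ℕ) : Scurve x l k t = 0 := by
  refine Scurve_of_no_supp x l (fun m hm => ?_) k
  have hm' : (1:ℝ) ≤ m := by exact_mod_cast hm
  have h1 : 1/(8*(m:ℝ)^2) < 1/(m:ℝ) :=
    one_div_lt_one_div_of_lt (by linarith) (by nlinarith)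
  have : 1/(m:ℝ) - t ≤ |t - 1/(m:ℝ)| := by
    rw [abs_sub_comm]; exact le_abs_self _
  have h2 : (0:ℝ) < 1/(m:ℝ) := by positivity
  linarith

omit [IsTopologicalAddGroup E] [ContinuousSMul ℝ E] [T2Space E] in
lemma Scurve_eq_sum {k : ℕ} {t : ℝ} {N : ℕ}
    (h : ∀ n : ℕ, N ≤ n → psi k (n+1) t • (x (n+1) - l) = (0:E)) :
    Scurve x l k t = ∑ n ∈ Finset.range N, psi k (n+1) t • (x (n+1) - l) :=
  tsum_eq_sum (fun n hn => h n (by simpa using hn))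

lemma psi_zero_of_big {t₀ : ℝ} (ht₀ : 0 < t₀) {s : ℝ} (hs : t₀/2 < s) {n : ℕ}
    (hn : Nat.ceil (4/t₀) ≤ n) (k : ℕ) : psi k (n+1) s = 0 := by
  have h1 : (4:ℝ)/t₀ ≤ n := le_trans (Nat.le_ceil _) (by exact_mod_cast hn)
  have hn0 : (0:ℝ) ≤ n := Nat.cast_nonneg n
  have hn1 : (1:ℝ) ≤ (n:ℝ)+1 := by linarith
  have h2 : 1/((n:ℝ)+1) ≤ t₀/4 := by
    rw [div_le_div_iff₀ (by positivity) (by norm_num)]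
    rw [div_le_iff₀ ht₀] at h1
    linarith
  have h3 : 1/(8*((n:ℝ)+1)^2) < 1/((n:ℝ)+1) :=
    one_div_lt_one_div_of_lt (by linarith) (by nlinarith)
  have : 1/(8*((n:ℝ)+1)^2) < |s - 1/((n:ℝ)+1)| := by
    rw [abs_of_pos (by linarith)]
    linarith
  rw [show ((n:ℝ)+1) = ((n+1:ℕ):ℝ) by push_cast; ring] at this
  exact psi_eq_zero (Nat.succ_le_succ (Nat.zero_le n)) this

lemma Scurve_quot_tendsto
    (hx : ∀ α : ℕ, IsVonNBounded ℝ {y : E | ∃ n : ℕ, 1 ≤ n ∧ y = ((n:ℝ)^α) • (x n - l)})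
    (k : ℕ) :
    Tendsto (fun h : ℝ => h⁻¹ • Scurve x l k h) (𝓝[≠] (0:ℝ)) (𝓝 (0:E)) := by
  rw [(nhds_basis_balanced ℝ E).tendsto_right_iff]
  rintro W ⟨hW, hWbal⟩
  obtain ⟨M, hM, hMb⟩ := exists_bound_Phi k
  obtain ⟨r, hr, hrW⟩ := (hx (2*k+2) hW).exists_pos
  set m₀ : ℝ := 2*8^k*M*r + 1 with hm₀def
  have hm₀ : 0 < m₀ := by positivity
  have hev : ∀ᶠ h in 𝓝[≠] (0:ℝ), |h| < 1/(2*m₀) := by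
    apply eventually_nhdsWithin_of_eventually_nhds
    have := eventually_abs_sub_lt (0:ℝ) (show (0:ℝ) < 1/(2*m₀) by positivity)
    simpa using this
  filter_upwards [hev, self_mem_nhdsWithin] with h hsm hne
  simp only [mem_compl_iff, mem_singleton_iff] at hne
  by_cases hs : ∃ m : ℕ, 1 ≤ m ∧ |h - 1/(m:ℝ)| ≤ 1/(8*(m:ℝ)^2)
  · obtain ⟨m, hm1, hsupp⟩ := hs
    have hmR : (1:ℝ) ≤ m := by exact_mod_cast hm1
    have hmpos : (0:ℝ) < m := by linarith
    obtain ⟨hlow, hup⟩ := supp_pos hm1 hsupp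
    have hh0 : 0 < h := lt_of_lt_of_le (by positivity) hlow
    have hmbig : m₀ < m := by
      have h1 : 1/(2*(m:ℝ)) < 1/(2*m₀) := lt_of_le_of_lt hlow (by rwa [abs_of_pos hh0] at hsm)
      have h2 := (div_lt_div_iff₀ (by positivity) (by positivity)).mp h1
      linarith
    rw [Scurve_single x l hm1 hsupp k, smul_smul]
    have hb₀ : ((m:ℝ)^(2*k+2)) • (x m - l) ∈ (r:ℝ) • W := by
      apply hrW r (by rw [Real.norm_eq_abs, abs_of_pos hr])
      exact ⟨m, hm1, rfl⟩
    obtain ⟨w, hw, hweq⟩ := hb₀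
    have hP : ((m:ℝ)^(2*k+2)) ≠ 0 := by positivity
    have hweq' : (r:ℝ) • w = ((m:ℝ)^(2*k+2)) • (x m - l) := hweq
    have hxml : x m - l = ((m:ℝ)^(2*k+2))⁻¹ • ((r:ℝ) • w) := by
      rw [hweq', inv_smul_smul₀ hP]
    rw [hxml, smul_smul, smul_smul, mul_assoc]
    set a : ℝ := h⁻¹ * psi k m h * (((m:ℝ)^(2*k+2))⁻¹ * r) with hadef
    have hq1 : |psi k m h| ≤ (8*(m:ℝ)^2)^k * M := psi_bound k m h hMb
    have hinv : |h⁻¹| ≤ 2*(m:ℝ) := by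
      rw [abs_of_pos (by positivity)]
      have := one_div_le_one_div_of_le (show (0:ℝ) < 1/(2*(m:ℝ)) by positivity) hlow
      rw [one_div_one_div] at this
      rwa [← one_div]
    have habs : |a| ≤ (2*(m:ℝ)) * ((8*(m:ℝ)^2)^k * M) * (((m:ℝ)^(2*k+2))⁻¹ * r) := by
      rw [hadef, abs_mul, abs_mul, abs_of_pos (show (0:ℝ) < ((m:ℝ)^(2*k+2))⁻¹ * r by positivity)]
      apply mul_le_mul _ le_rfl (by positivity) (by positivity)
      exact mul_le_mul hinv hq1 (abs_nonneg _) (by positivity)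
    have hkey : (2*(m:ℝ)) * ((8*(m:ℝ)^2)^k * M) * (((m:ℝ)^(2*k+2))⁻¹ * r)
        = 2*8^k*M*r/(m:ℝ) := by
      rw [mul_pow]
      field_simp
      ring
    have hfin : |a| ≤ 1 := by
      rw [hkey] at habs
      have : 2*8^k*M*r/(m:ℝ) < 1 := by
        rw [div_lt_one hmpos]
        linarith
      linarith
    exact hWbal.smul_mem (by rwa [Real.norm_eq_abs]) hw
  · push_neg at hs
    rw [Scurve_of_no_supp x l hs k, smul_zero]
    exact mem_of_mem_nhds hW

lemma curveDerivAt_Dcurve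
    (hx : ∀ α : ℕ, IsVonNBounded ℝ {y : E | ∃ n : ℕ, 1 ≤ n ∧ y = ((n:ℝ)^α) • (x n - l)})
    (k : ℕ) (t : ℝ) :
    CurveDerivAt (Dcurve x l k) (Dcurve x l (k+1) t) t := by
  rcases lt_trichotomy t 0 with ht | ht | ht
  · have hev : Dcurve x l k =ᶠ[𝓝 t] fun _ => (if k = 0 then l else 0) := by
      filter_upwards [Iio_mem_nhds ht] with s hs
      rw [Dcurve, Scurve_at_nonpos x l (le_of_lt hs), add_zero]
    have hD : Dcurve x l (k+1) t = 0 := by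
      rw [Dcurve, if_neg (Nat.succ_ne_zero k), Scurve_at_nonpos x l (le_of_lt ht), add_zero]
    rw [hD]
    exact CurveDerivAt.congr_nhds hev (curveDerivAt_const _ t)
  · subst ht
    have hD : Dcurve x l (k+1) 0 = 0 := by
      rw [Dcurve, if_neg (Nat.succ_ne_zero k), Scurve_at_nonpos x l le_rfl, add_zero]
    rw [hD]
    unfold CurveDerivAt
    refine (Scurve_quot_tendsto x l hx k).congr fun h => ?_
    rw [zero_add, Dcurve, Dcurve, Scurve_at_nonpos x l le_rfl, add_zero]
    congr 1
    abel
  · have hIoi : Ioi (t/2) ∈ 𝓝 t := Ioi_mem_nhds (by linarith)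
    set N := Nat.ceil (4/t) with hN
    have hev : Dcurve x l k =ᶠ[𝓝 t] fun s => (if k = 0 then l else 0) +
        ∑ n ∈ Finset.range N, psi k (n+1) s • (x (n+1) - l) := by
      filter_upwards [hIoi] with s hs
      rw [Dcurve, Scurve_eq_sum x l (fun n hn => by rw [psi_zero_of_big ht hs hn k, zero_smul])]
    refine CurveDerivAt.congr_nhds hev ?_
    have hder := CurveDerivAt.const_add (if k = 0 then l else 0)
      (curveDerivAt_finset_sum (Finset.range N)
        (fun n _ => curveDerivAt_smul (x (n+1) - l) (hasDerivAt_psi k (n+1) t)))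
    have hval : Dcurve x l (k+1) t = ∑ n ∈ Finset.range N,
        psi (k+1) (n+1) t • (x (n+1) - l) := by
      rw [Dcurve, if_neg (Nat.succ_ne_zero k), zero_add,
        Scurve_eq_sum x l (fun n hn => by
          rw [psi_zero_of_big ht (show t/2 < t by linarith) hn (k+1), zero_smul])]
    rw [hval]
    exact hder
end Curve

theorem special_curve_lemma {E : Type*} [AddCommGroup E] [Module ℝ E] [TopologicalSpace E]
    [IsTopologicalAddGroup E] [ContinuousSMul ℝ E] [LocallyConvexSpace ℝ E] [T2Space E] (x : ℕ → E) (l : E)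
    (h : ∀ α : ℕ, Bornology.IsVonNBounded ℝ
      {y : E | ∃ n : ℕ, 1 ≤ n ∧ y = ((n : ℝ) ^ α) • (x n - l)}) :
    ∃ c : ℝ → E, IsSmoothCurve c ∧ (∀ n : ℕ, 1 ≤ n → c (1 / (n : ℝ)) = x n) ∧
      c 0 = l := by 
  refine ⟨Dcurve x l 0, ⟨Dcurve x l, rfl, curveDerivAt_Dcurve x l h,
    fun n => continuous_iff_continuousAt.mpr fun t =>
      (curveDerivAt_Dcurve x l h n t).continuousAt⟩, fun n hn => ?_, ?_⟩
  · have hsupp : |1/(n:ℝ) - 1/(n:ℝ)| ≤ 1/(8*(n:ℝ)^2) := by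
      rw [sub_self, abs_zero]
      positivity
    rw [Dcurve, if_pos rfl, Scurve_single x l hn hsupp 0, psi_at_center, one_smul]
    abel
  · rw [Dcurve, if_pos rfl, Scurve_at_nonpos x l le_rfl, add_zero]
end

section
/- Let E be a locally convex space. A subset A of E is c^∞-closed (closed in the Mackey-closure topology) if and only if for every sequence (x_n) of points of A that Mackey-converges to some x ∈ E, the limit x belongs to A. -/
open Filter Topology Set Bornology Pointwise

universe u v

section myAux
section helpers2
variable {E : Type u} [AddCommGroup E] [Module ℝ E] [TopologicalSpace E]

lemma my_curveDerivAt_congr {f g : ℝ → E} {v : E} {t : ℝ} (h : f =ᶠ[𝓝 t] g)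
    (hg : CurveDerivAt g v t) : CurveDerivAt f v t := by
  have hft : f t = g t := h.self_of_nhds
  have hcont : Tendsto (fun s : ℝ => t + s) (𝓝 0) (𝓝 t) := by
    simpa using (continuous_add_left t).tendsto (0 : ℝ)
  have hev : ∀ᶠ s in 𝓝 (0 : ℝ), f (t + s) = g (t + s) := hcont.eventually h
  refine hg.congr' ?_
  filter_upwards [nhdsWithin_le_nhds hev] with s hs
  rw [hs, hft]

lemma my_curveDerivAt_const_add {x : E} {f : ℝ → E} {v : E} {t : ℝ} (h : CurveDerivAt f v t) :
    CurveDerivAt (fun s => x + f s) v t := by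
  unfold CurveDerivAt at *
  simpa only [add_sub_add_left_eq_sub] using h

lemma my_curveDerivAt_const (x : E) (t : ℝ) : CurveDerivAt (fun _ => x) 0 t := by
  unfold CurveDerivAt
  simpa using tendsto_const_nhds

variable [ContinuousSMul ℝ E]

lemma my_curveDerivAt_smul_const {g : ℝ → ℝ} {g' : ℝ} {t : ℝ} (v : E)
    (h : HasDerivAt g g' t) : CurveDerivAt (fun s => g s • v) (g' • v) t := by
  have h1 := h.tendsto_slope_zero
  have h2 : Tendsto (fun a : ℝ => a • v) (𝓝 g') (𝓝 (g' • v)) :=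
    (continuous_id.smul continuous_const).tendsto g'
  refine (h2.comp h1).congr fun s => ?_
  simp only [Function.comp_apply, smul_smul, ← sub_smul, smul_assoc]

lemma my_curveDerivAt_clm {c : ℝ → E} {v : E} {t : ℝ} (ℓ : E →L[ℝ] ℝ) (h : CurveDerivAt c v t) :
    HasDerivAt (fun s => ℓ (c s)) (ℓ v) t := by
  rw [hasDerivAt_iff_tendsto_slope_zero]
  refine ((ℓ.continuous.tendsto v).comp h).congr fun s => ?_
  simp [Function.comp_apply, map_sub]

end helpers2

noncomputable def myPhi : ℝ → ℝ := (⟨1/2, 1, by norm_num, by norm_num⟩ : ContDiffBump (0:ℝ))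

lemma myPhi_contDiff : ContDiff ℝ (⊤ : ℕ∞) myPhi :=
  ContDiffBump.contDiff _

lemma myPhi_one : myPhi 0 = 1 :=
  ContDiffBump.one_of_mem_closedBall _ (by norm_num [Metric.mem_closedBall])

lemma my_iteratedDeriv_zero_fun (n : ℕ) : iteratedDeriv n (fun _ : ℝ => (0:ℝ)) = fun _ => 0 := by
  induction n with
  | zero => simp [iteratedDeriv_zero]
  | succ n ih => rw [iteratedDeriv_succ', deriv_const']; exact ih

lemma myPhi_iteratedDeriv_zero (k : ℕ) {u : ℝ} (hu : 1 < |u|) : iteratedDeriv k myPhi u = 0 := by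
  have hev : myPhi =ᶠ[𝓝 u] (fun _ => 0) := by
    have hopen : IsOpen {w : ℝ | 1 < |w|} := isOpen_lt continuous_const continuous_abs
    filter_upwards [hopen.mem_nhds hu] with w hw
    exact ContDiffBump.zero_of_le_dist _ (by simpa [Real.dist_eq] using hw.le)
  rw [hev.iteratedDeriv_eq k, my_iteratedDeriv_zero_fun]

lemma myPhi_iteratedDeriv_cont (k : ℕ) : Continuous (iteratedDeriv k myPhi) :=
  myPhi_contDiff.continuous_iteratedDeriv k (by exact_mod_cast le_top)

lemma myPhi_bound (k : ℕ) : ∃ M : ℝ, 0 ≤ M ∧ ∀ u, |iteratedDeriv k myPhi u| ≤ M := by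
  have hcs : HasCompactSupport (iteratedDeriv k myPhi) := by
    rw [iteratedDeriv_eq_iterate]
    induction k with
    | zero => exact ContDiffBump.hasCompactSupport _
    | succ n ih => rw [Function.iterate_succ_apply']; exact ih.deriv
  obtain ⟨C, hC⟩ := (myPhi_iteratedDeriv_cont k).bounded_above_of_compact_support hcs
  exact ⟨C, le_trans (abs_nonneg _) (hC 0), fun u => by simpa using hC u⟩

lemma myPhi_diffAt (k : ℕ) (u : ℝ) : DifferentiableAt ℝ (iteratedDeriv k myPhi) u := by
  have := myPhi_contDiff.differentiable_iteratedDeriv k (by exact_mod_cast (lt_top_iff_ne_top.2 (by simp)) : (k : WithTop ℕ∞) < (⊤ : ℕ∞))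
  exact this.differentiableAt

lemma myG_hasDeriv (A : ℝ) (k : ℕ) (t : ℝ) :
    HasDerivAt (fun s => A^k * iteratedDeriv k myPhi (A * s - 4))
      (A^(k+1) * iteratedDeriv (k+1) myPhi (A * t - 4)) t := by
  have hin : HasDerivAt (fun s : ℝ => A * s - 4) A t := by
    simpa using ((hasDerivAt_id t).const_mul A).sub_const 4
  have hout : HasDerivAt (iteratedDeriv k myPhi) (iteratedDeriv (k+1) myPhi (A * t - 4))
      (A * t - 4) := by
    have := (myPhi_diffAt k (A * t - 4)).hasDerivAt
    rwa [← iteratedDeriv_succ] at this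
  have := (hout.comp t hin).const_mul (A^k)
  convert this using 1
  · rfl
  · rfl
  · rfl
  ring

lemma myG_cont (A : ℝ) (k : ℕ) :
    Continuous (fun s => A^k * iteratedDeriv k myPhi (A * s - 4)) :=
  continuous_const.mul ((myPhi_iteratedDeriv_cont k).comp
    ((continuous_const.mul continuous_id).sub continuous_const))

variable {E : Type u} [AddCommGroup E] [Module ℝ E] [TopologicalSpace E]

lemma my_cinf_closed_iff (A : Set E) :
    @IsClosed E (cInfTopology E) A ↔ ∀ c : ℝ → E, IsSmoothCurve c → IsClosed (c ⁻¹' A) := by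
  rw [cInfTopology, isClosed_iSup_iff]
  constructor
  · intro h c hc
    have := h ⟨c, hc⟩
    rwa [isClosed_coinduced] at this
  · rintro h ⟨c, hc⟩
    rw [isClosed_coinduced]
    exact h c hc

section bdd
variable [IsTopologicalAddGroup E] [ContinuousSMul ℝ E]

lemma my_isCompact_isVonNBounded {K : Set E} (hK : IsCompact K) : IsVonNBounded ℝ K := by
  letI := IsTopologicalAddGroup.rightUniformSpace E
  haveI := isUniformAddGroup_of_addCommGroup (G := E)
  exact hK.totallyBounded.isVonNBounded ℝ

lemma my_finite_isVonNBounded {K : Set E} (hK : K.Finite) : IsVonNBounded ℝ K := by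
  refine Set.Finite.induction_on (motive := fun s _ => IsVonNBounded ℝ s) K hK (isVonNBounded_empty ℝ E) ?_
  intro a s _ _ ih
  exact ih.insert a

lemma my_bounded_closure_absConvexHull [LocallyConvexSpace ℝ E] {K : Set E}
    (hK : IsVonNBounded ℝ K) : IsVonNBounded ℝ (closure (absConvexHull ℝ K)) := by
  intro V hV
  obtain ⟨W, ⟨hWnhds, hWclosed⟩, hWV⟩ := (closed_nhds_basis (0:E)).mem_iff.1 hV
  obtain ⟨W', ⟨hW'nhds, hW'abs⟩, hW'W⟩ := (nhds_hasBasis_absConvex ℝ E).mem_iff.1 hWnhds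
  have habs : AbsConvex ℝ (closure W') := hW'abs.closure
  have hW''V : closure W' ⊆ V := (closure_minimal hW'W hWclosed).trans hWV
  have habsorbK : Absorbs ℝ (closure W') K :=
    hK (mem_of_superset hW'nhds subset_closure)
  refine Absorbs.mono_left ?_ hW''V
  filter_upwards [habsorbK.eventually, eventually_ne_cobounded (0:ℝ)] with a ha ha0
  have hsmul_abs : AbsConvex ℝ (a • closure W') := ⟨habs.1.smul a, habs.2.smul a⟩
  have hsmul_closed : IsClosed (a • closure W') := isClosed_closure.smul_of_ne_zero ha0
  exact closure_minimal (absConvexHull_min ha hsmul_abs) hsmul_closed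
end bdd

section sep
variable [IsTopologicalAddGroup E] [ContinuousSMul ℝ E] [LocallyConvexSpace ℝ E]

lemma my_slope_mem_of_lt {c c' : ℝ → E} (hcont : Continuous c)
    (hd : ∀ s, CurveDerivAt c (c' s) s) {a b t₁ t₂ : ℝ} (h₁ : t₁ ∈ Icc a b) (h₂ : t₂ ∈ Icc a b)
    (hlt : t₁ < t₂) : (t₂ - t₁)⁻¹ • (c t₂ - c t₁) ∈ closure (convexHull ℝ (c' '' Icc a b)) := by
  by_contra hq
  obtain ⟨ℓ, r, hsep, hgt⟩ := geometric_hahn_banach_closed_point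
      ((convex_convexHull ℝ _).closure) isClosed_closure hq
  have hder : ∀ s ∈ Ioo t₁ t₂, HasDerivAt (fun s => ℓ (c s)) (ℓ (c' s)) s :=
    fun s _ => my_curveDerivAt_clm ℓ (hd s)
  obtain ⟨ξ, hξ, hslope⟩ := exists_hasDerivAt_eq_slope (fun s => ℓ (c s)) (fun s => ℓ (c' s))
      hlt ((ℓ.continuous.comp hcont).continuousOn) hder
  have hmem : c' ξ ∈ closure (convexHull ℝ (c' '' Icc a b)) := by
    refine subset_closure (subset_convexHull ℝ _ ?_)
    exact mem_image_of_mem c' ⟨le_trans h₁.1 hξ.1.le, le_trans hξ.2.le h₂.2⟩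
  have h1 : ℓ ((t₂ - t₁)⁻¹ • (c t₂ - c t₁)) = ℓ (c' ξ) := by
    rw [map_smul, map_sub, hslope]
    simp [smul_eq_mul, div_eq_inv_mul]
  have := hsep _ hmem
  rw [← h1] at this
  exact absurd hgt (not_lt.2 this.le)

lemma my_diffQuotients_subset {c c' : ℝ → E} (hcont : Continuous c)
    (hd : ∀ s, CurveDerivAt c (c' s) s) (a b : ℝ) :
    DiffQuotients c (Icc a b) ⊆ closure (convexHull ℝ (c' '' Icc a b)) := by
  rintro q ⟨t₁, h₁, t₂, h₂, hne, rfl⟩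
  rcases hne.lt_or_gt with hlt | hlt
  · exact my_slope_mem_of_lt hcont hd h₁ h₂ hlt
  · have : (t₂ - t₁)⁻¹ • (c t₂ - c t₁) = (t₁ - t₂)⁻¹ • (c t₁ - c t₂) := by
      rw [← neg_sub t₁ t₂, ← neg_sub (c t₁) (c t₂), inv_neg, neg_smul_neg]
    rw [this]
    exact my_slope_mem_of_lt hcont hd h₂ h₁ hlt
end sep


section mack
variable {E : Type u} [AddCommGroup E] [Module ℝ E] [TopologicalSpace E] [IsTopologicalAddGroup E] [ContinuousSMul ℝ E] [LocallyConvexSpace ℝ E]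
lemma my_mackey_of_smooth {c : ℝ → E} (hc : IsSmoothCurve c) {u : ℕ → ℝ} {t : ℝ}
    (hu : Tendsto u atTop (𝓝 t)) : MackeyConvSeq (fun n => c (u n)) (c t) := by
  obtain ⟨D, hD0, hDd, hDc⟩ := hc
  have hcont : Continuous c := hD0 ▸ hDc 0
  have hd : ∀ s, CurveDerivAt c (D 1 s) s := fun s => hD0 ▸ hDd 0 s
  obtain ⟨N, hN⟩ := Metric.tendsto_atTop.1 hu 1 one_pos
  set q : ℕ → E := fun n => if u n = t then 0 else (u n - t)⁻¹ • (c (u n) - c t) with hq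
  set K : Set E := D 1 '' Icc (t-1) (t+1) ∪ q '' Iio N with hK
  have hKbdd : IsVonNBounded ℝ K :=
    (my_isCompact_isVonNBounded (isCompact_Icc.image (hDc 1))).union
      (my_finite_isVonNBounded ((finite_Iio N).image q))
  set B := closure (absConvexHull ℝ K) with hB
  have hKB : K ⊆ B := fun z hz => subset_closure (subset_absConvexHull hz)
  have hqB : ∀ n, q n ∈ B := by
    intro n
    rcases lt_or_ge n N with hn | hn
    · exact hKB (Or.inr (mem_image_of_mem q hn))
    · by_cases he : u n = t
      · simp only [hq, if_pos he]
        -- 0 ∈ B : K nonempty? use q-image? use D 1 t ∈ K... but need 0 ∈ B; use balanced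
        have hD1tK : D 1 t ∈ K := Or.inl (mem_image_of_mem _ (by constructor <;> linarith))
        have hBbal : Balanced ℝ B := (absConvex_absConvexHull (𝕜 := ℝ)).1.closure
        have h0 := hBbal 0 (by norm_num) ⟨_, hKB hD1tK, rfl⟩
        simpa using h0
      · have hicc : u n ∈ Icc (t-1) (t+1) := by
          have := hN n hn
          rw [Real.dist_eq] at this
          constructor <;> [linarith [neg_abs_le (u n - t)]; linarith [le_abs_self (u n - t)]]
        have hmem : q n ∈ DiffQuotients c (Icc (t-1) (t+1)) := by
          refine ⟨t, by constructor <;> linarith, u n, hicc, fun h => he h.symm, ?_⟩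
          simp [hq, if_neg he]
        have h1 := my_diffQuotients_subset hcont hd (t-1) (t+1) hmem
        refine (closure_mono (convexHull_min ?_ (absConvex_absConvexHull (𝕜 := ℝ)).2)) h1
        exact subset_trans (subset_union_left) subset_absConvexHull
  refine ⟨B, ⟨(absConvex_absConvexHull (𝕜 := ℝ)).2.closure,
      (absConvex_absConvexHull (𝕜 := ℝ)).1.closure⟩,
    my_bounded_closure_absConvexHull hKbdd, fun n => u n - t, by simpa using hu.sub_const t, ?_⟩
  intro n
  show c (u n) - c t ∈ (u n - t) • B
  by_cases he : u n = t
  · rw [he, sub_self, sub_self]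
    exact ⟨q n, hqB n, zero_smul ℝ _⟩
  · refine ⟨q n, hqB n, ?_⟩
    simp only [hq, if_neg he]
    rw [smul_inv_smul₀ (sub_ne_zero.2 he)]
end mack

noncomputable section

def myQ : ℕ → ℝ := fun j => ((2:ℝ)⁻¹)^j
def myA : ℕ → ℝ := fun j => (2:ℝ)^(j+2)
def myG (j k : ℕ) (s : ℝ) : ℝ := (myA j)^k * iteratedDeriv k myPhi (myA j * s - 4)

lemma myQ_pos (j : ℕ) : 0 < myQ j := pow_pos (by norm_num) j
lemma myQ_succ (j : ℕ) : myQ (j+1) = myQ j / 2 := by simp [myQ, pow_succ]; ring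
lemma myQ_anti {i j : ℕ} (h : i ≤ j) : myQ j ≤ myQ i :=
  pow_le_pow_of_le_one (by norm_num) (by norm_num) h
lemma myA_pos (j : ℕ) : 0 < myA j := pow_pos (by norm_num) _
lemma myAQ (j : ℕ) : myA j * myQ j = 4 := by
  simp only [myA, myQ, pow_add]
  rw [show (2:ℝ)^j * ((2:ℝ)^2) * ((2:ℝ)⁻¹)^j = ((2:ℝ) * 2⁻¹)^j * 4 by rw [mul_pow]; ring]
  norm_num

lemma myJex {t : ℝ} (ht : 0 < t) : ∃ j : ℕ, 7/10 * myQ j < t := by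
  obtain ⟨j, hj⟩ := exists_pow_lt_of_lt_one ht (by norm_num : (2:ℝ)⁻¹ < 1)
  exact ⟨j, by have := myQ_pos j; simp only [myQ] at *; nlinarith⟩

def myJ (t : ℝ) : ℕ := if ht : 0 < t then Nat.find (myJex ht) else 0

lemma myJ_lb {t : ℝ} (ht : 0 < t) : 7/10 * myQ (myJ t) < t := by
  rw [myJ, dif_pos ht]; exact Nat.find_spec (myJex ht)

lemma myJ_min {t : ℝ} (ht : 0 < t) {i : ℕ} (hi : i < myJ t) : t ≤ 7/10 * myQ i := by
  rw [myJ, dif_pos ht] at hi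
  exact le_of_not_gt (Nat.find_min (myJex ht) hi)

lemma myJ_eq {t : ℝ} (ht : 0 < t) {j : ℕ} (h1 : 7/10 * myQ j < t)
    (h2 : ∀ i < j, t ≤ 7/10 * myQ i) : myJ t = j := by
  rcases lt_trichotomy (myJ t) j with h | h | h
  · exact absurd (h2 _ h) (not_le.2 (myJ_lb ht))
  · exact h
  · exact absurd (myJ_min ht h) (not_le.2 h1)

lemma myJ_gt {t : ℝ} (ht : 0 < t) {N : ℕ} (hle : t ≤ 7/10 * myQ N) : N < myJ t := by
  by_contra h
  push_neg at h
  have := (myJ_lb ht).trans_le (hle.trans (by nlinarith [myQ_anti h, myQ_pos N] : 7/10 * myQ N ≤ 7/10 * myQ (myJ t)))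
  exact lt_irrefl _ this

variable {E : Type u} [AddCommGroup E] [Module ℝ E] [TopologicalSpace E]

def myS (v : ℕ → E) (k : ℕ) (t : ℝ) : E := if 0 < t then myG (myJ t) k t • v (myJ t) else 0

lemma myG_vanish {j k : ℕ} {s : ℝ} (h : 1 < |myA j * s - 4|) : myG j k s = 0 := by
  rw [myG, myPhi_iteratedDeriv_zero k h, mul_zero]

lemma myS_local (v : ℕ → E) {t : ℝ} (ht : t ≠ 0) :
    (∃ U ∈ 𝓝 t, ∃ j, ∀ s ∈ U, ∀ k, myS v k s = myG j k s • v j) ∨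
    (∃ U ∈ 𝓝 t, ∀ s ∈ U, ∀ k, myS v k s = 0) := by
  rcases ht.lt_or_gt with hneg | hpos
  · right
    refine ⟨Iio 0, Iio_mem_nhds hneg, fun s hs k => ?_⟩
    rw [myS, if_neg (not_lt.2 (le_of_lt hs))]
  · rcases hc : myJ t with - | j'
    ·
      left
      have h1 : (7:ℝ)/10 < t := by
        have := myJ_lb hpos; rw [hc] at this; simpa [myQ] using this
      refine ⟨Ioi (7/10), Ioi_mem_nhds h1, 0, fun s hs k => ?_⟩
      have hs0 : (0:ℝ) < s := lt_trans (by norm_num) hs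
      have : myJ s = 0 := myJ_eq hs0 (by simpa [myQ] using hs) (fun i hi => absurd hi (Nat.not_lt_zero i))
      rw [myS, if_pos hs0, this]
    ·
      have hub : t ≤ 14/10 * myQ (j'+1) := by
        have h := myJ_min hpos (i := j') (by rw [hc]; exact Nat.lt_succ_self j')
        have hq : myQ j' = 2 * myQ (j'+1) := by rw [myQ_succ]; ring
        rw [hq] at h; linarith
      have hlb : 7/10 * myQ (j'+1) < t := by have := myJ_lb hpos; rwa [hc] at this
      rcases lt_or_eq_of_le hub with hlt | heq
      · left
        refine ⟨Ioo (7/10 * myQ (j'+1)) (14/10 * myQ (j'+1)), Ioo_mem_nhds hlb hlt, j'+1,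
          fun s hs k => ?_⟩
        have hs0 : (0:ℝ) < s := lt_trans (mul_pos (by norm_num) (myQ_pos _)) hs.1
        have hJs : myJ s = j'+1 := by
          refine myJ_eq hs0 hs.1 (fun i hi => ?_)
          have hle : myQ j' ≤ myQ i := myQ_anti (Nat.lt_succ_iff.1 hi)
          have hq : myQ j' = 2 * myQ (j'+1) := by rw [myQ_succ]; ring
          nlinarith [hs.2]
        rw [myS, if_pos hs0, hJs]
      · right
        refine ⟨Ioo (5/4 * myQ (j'+1)) (3/2 * myQ (j'+1)),
          Ioo_mem_nhds (by nlinarith [myQ_pos (j'+1)]) (by nlinarith [myQ_pos (j'+1)]), fun s hs k => ?_⟩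
        have hqpos := myQ_pos (j'+1)
        have hs0 : (0:ℝ) < s := lt_trans (mul_pos (by norm_num) (myQ_pos _)) hs.1
        have hAq := myAQ (j'+1)
        have hApos := myA_pos (j'+1)
        rcases le_or_gt s (14/10 * myQ (j'+1)) with hcase | hcase
        · have hJs : myJ s = j'+1 := by
            refine myJ_eq hs0 (by nlinarith [hs.1]) (fun i hi => ?_)
            have hle : myQ j' ≤ myQ i := myQ_anti (Nat.lt_succ_iff.1 hi)
            have hq : myQ j' = 2 * myQ (j'+1) := by rw [myQ_succ]; ring
            nlinarith
          have hval : myG (j'+1) k s = 0 := by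
            apply myG_vanish
            have : myA (j'+1) * s > 5 := by nlinarith [hs.1]
            rw [abs_of_pos (by linarith)]; linarith
          rw [myS, if_pos hs0, hJs, hval, zero_smul]
        · have hJs : myJ s = j' := by
            refine myJ_eq hs0 ?_ (fun i hi => ?_)
            · have hq : myQ j' = 2 * myQ (j'+1) := by rw [myQ_succ]; ring
              nlinarith
            · -- i < j', so i+1 ≤ j', myQ j' ≤ myQ (i+1) = myQ i / 2
              have hle : myQ j' ≤ myQ (i+1) := myQ_anti hi
              have hq1 : myQ (i+1) = myQ i / 2 := myQ_succ i
              have hq : myQ j' = 2 * myQ (j'+1) := by rw [myQ_succ]; ring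
              have := hs.2
              nlinarith
          have hval : myG j' k s = 0 := by
            apply myG_vanish
            have hAq' := myAQ j'
            have hApos' := myA_pos j'
            have hA2 : myA (j'+1) = 2 * myA j' := by simp only [myA, pow_succ]; ring
            have h1 : myA j' * s < 3 := by nlinarith [hs.2]
            have h2 : myA j' * s > 14/5 := by nlinarith [hcase]
            rw [abs_of_neg (by linarith)]; linarith
          rw [myS, if_pos hs0, hJs, hval, zero_smul]
end

noncomputable section curve
variable {E : Type u} [AddCommGroup E] [Module ℝ E] [TopologicalSpace E]
  [IsTopologicalAddGroup E] [ContinuousSMul ℝ E]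
variable {B : Set E} {b : ℕ → E} {μ : ℕ → ℝ}

def myC (k : ℕ) (M : ℝ) : ℕ → ℝ := fun j => (2:ℝ)^(j+1) * ((2:ℝ)^(j+2))^k * M * myQ (j*j)

lemma myQ_inv (j : ℕ) : (myQ j)⁻¹ = (2:ℝ)^j := by rw [myQ, inv_pow, inv_inv]

lemma myC_tendsto (k : ℕ) (M : ℝ) (hM : 0 ≤ M) : Tendsto (myC k M) atTop (𝓝 0) := by
  have h2 : Tendsto (fun j : ℕ => M * ((2:ℝ)⁻¹)^j) atTop (𝓝 0) := by
    simpa using (tendsto_pow_atTop_nhds_zero_of_lt_one (by norm_num)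
      (by norm_num : (2:ℝ)⁻¹ < 1)).const_mul M
  refine squeeze_zero' ?_ ?_ h2
  · filter_upwards with j
    have h1 := myQ_pos (j*j)
    have h3 : (0:ℝ) < (2:ℝ)^(j+1) := by positivity
    have h4 : (0:ℝ) < ((2:ℝ)^(j+2))^k := by positivity
    unfold myC; positivity
  · filter_upwards [eventually_ge_atTop (2*k+3)] with j hj
    set e := (j+1)+(j+2)*k with he
    have hexp : e + j ≤ j*j := by rw [he]; nlinarith
    have h1 : (2:ℝ)^(j+1) * ((2:ℝ)^(j+2))^k = (2:ℝ)^e := by rw [he, ← pow_mul, ← pow_add]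
    have hpow : (2:ℝ)^(e+j) ≤ 2^(j*j) := pow_le_pow_right₀ (by norm_num) hexp
    have hq : myQ (j*j) = ((2:ℝ)^(j*j))⁻¹ := by rw [← myQ_inv, inv_inv]
    have hinv : ((2:ℝ)^(j*j))⁻¹ ≤ ((2:ℝ)^(e+j))⁻¹ := by
      apply inv_anti₀ (by positivity) hpow
    have heq2 : (2:ℝ)^e * ((2:ℝ)^(e+j))⁻¹ = ((2:ℝ)^j)⁻¹ := by
      rw [pow_add (2:ℝ) e j, mul_inv, ← mul_assoc, mul_inv_cancel₀ (by positivity), one_mul]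
    calc myC k M j = M * ((2:ℝ)^e * myQ (j*j)) := by rw [myC, ← h1]; ring
    _ ≤ M * ((2:ℝ)^e * ((2:ℝ)^(e+j))⁻¹) := by
        apply mul_le_mul_of_nonneg_left ?_ hM
        apply mul_le_mul_of_nonneg_left ?_ (by positivity)
        rw [hq]; exact hinv
    _ = M * ((2:ℝ)⁻¹)^j := by rw [heq2, inv_pow]

lemma myS_tendsto (hBb : IsVonNBounded ℝ B) (hbB : ∀ j, b j ∈ B) (hμ : ∀ j, |μ j| ≤ myQ (j*j))
    (k : ℕ) {w : ℝ → ℝ} (hw : ∀ t, 0 < t → |w t| ≤ 2^(myJ t + 1)) :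
    Tendsto (fun t => w t • myS (fun j => μ j • b j) k t) (𝓝[≠] (0:ℝ)) (𝓝 0) := by
  obtain ⟨M, hM0, hMb⟩ := myPhi_bound k
  set v : ℕ → E := fun j => μ j • b j with hv
  set ε : ℝ → ℝ := fun t => if 0 < t then w t * myG (myJ t) k t * μ (myJ t) else 0 with hε
  have heq : (fun t => w t • myS v k t) = fun t => ε t • b (myJ t) := by
    funext t
    by_cases ht : 0 < t
    · simp only [myS, if_pos ht, hε, hv, smul_smul, mul_assoc]
    · simp [myS, if_neg ht, hε]
  have hεb : ∀ t, 0 < t → |ε t| ≤ myC k M (myJ t) := by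
    intro t ht
    have hg : |myG (myJ t) k t| ≤ ((2:ℝ)^(myJ t + 2))^k * M := by
      rw [myG, abs_mul, abs_of_pos (pow_pos (myA_pos _) k)]
      have : myA (myJ t) = (2:ℝ)^(myJ t + 2) := rfl
      rw [this]
      exact mul_le_mul_of_nonneg_left (hMb _) (by positivity)
    rw [hε]
    simp only [if_pos ht]
    rw [abs_mul, abs_mul, myC]
    have h1 : (0:ℝ) ≤ |w t| := abs_nonneg _
    have h2 : (0:ℝ) ≤ |myG (myJ t) k t| := abs_nonneg _
    have h3 : (0:ℝ) ≤ |μ (myJ t)| := abs_nonneg _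
    have hbd1 := hw t ht
    have hbd3 := hμ (myJ t)
    have hQnn : (0:ℝ) ≤ myQ (myJ t * myJ t) := (myQ_pos _).le
    have hGnn : (0:ℝ) ≤ ((2:ℝ)^(myJ t + 2))^k * M := le_trans h2 hg
    calc |w t| * |myG (myJ t) k t| * |μ (myJ t)|
        ≤ (2:ℝ)^(myJ t + 1) * (((2:ℝ)^(myJ t + 2))^k * M) * myQ (myJ t * myJ t) := by
          apply mul_le_mul (mul_le_mul hbd1 hg h2 (by positivity)) hbd3 h3
          positivity
    _ = (2:ℝ)^(myJ t + 1) * ((2:ℝ)^(myJ t + 2))^k * M * myQ (myJ t * myJ t) := by ring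
  have hεt : Tendsto ε (𝓝[≠] (0:ℝ)) (𝓝 0) := by
    rw [Metric.tendsto_nhds]
    intro δ hδ
    obtain ⟨N, hN⟩ := (myC_tendsto k M hM0).eventually (Metric.ball_mem_nhds (0:ℝ) hδ) |>.exists_forall_of_atTop
    have h1 : ∀ᶠ s in 𝓝 (0:ℝ), |s - 0| < 7/10 * myQ N :=
      eventually_abs_sub_lt 0 (by have := myQ_pos N; positivity)
    filter_upwards [nhdsWithin_le_nhds h1, self_mem_nhdsWithin] with s hs hne
    rcases (Ne.lt_or_gt hne) with h | h
    · have : ε s = 0 := by rw [hε]; simp [not_lt.2 h.le]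
      simpa [this] using hδ
    · rw [sub_zero] at hs
      have hsle : s ≤ 7/10 * myQ N := by rw [abs_of_pos h] at hs; exact hs.le
      have hJ : N < myJ s := myJ_gt h hsle
      have hb := hεb s h
      rw [Real.dist_eq, sub_zero]
      calc |ε s| ≤ myC k M (myJ s) := hb
      _ ≤ |myC k M (myJ s)| := le_abs_self _
      _ < δ := by have := hN (myJ s) hJ.le; simpa [Real.dist_eq] using this
  rw [heq]
  exact hBb.smul_tendsto_zero (Eventually.of_forall (fun t => hbB (myJ t))) hεt
end curve

noncomputable section curve2
variable {E : Type u} [AddCommGroup E] [Module ℝ E] [TopologicalSpace E]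
  [IsTopologicalAddGroup E] [ContinuousSMul ℝ E]
variable {B : Set E} {b : ℕ → E} {μ : ℕ → ℝ}

lemma my_inv_bound : ∀ t : ℝ, 0 < t → |t⁻¹| ≤ 2^(myJ t + 1) := by
  intro t ht
  have hlb := myJ_lb ht
  have hq := myQ_pos (myJ t)
  have h1 : t⁻¹ ≤ (7/10 * myQ (myJ t))⁻¹ := by
    apply inv_anti₀ (by positivity) hlb.le
  have h2 : (7/10 * myQ (myJ t))⁻¹ = 10/7 * (2:ℝ)^(myJ t) := by
    rw [mul_inv, myQ_inv]; norm_num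
  rw [abs_of_pos (inv_pos.2 ht)]
  have h3 : (0:ℝ) < (2:ℝ)^(myJ t) := by positivity
  calc t⁻¹ ≤ 10/7 * (2:ℝ)^(myJ t) := by rw [← h2]; exact h1
  _ ≤ 2 * (2:ℝ)^(myJ t) := by nlinarith
  _ = 2^(myJ t + 1) := by rw [pow_succ]; ring

lemma myS_curveDeriv (hBb : IsVonNBounded ℝ B) (hbB : ∀ j, b j ∈ B)
    (hμ : ∀ j, |μ j| ≤ myQ (j*j)) (k : ℕ) (t : ℝ) :
    CurveDerivAt (myS (fun j => μ j • b j) k) (myS (fun j => μ j • b j) (k+1) t) t := by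
  set v : ℕ → E := fun j => μ j • b j with hv
  by_cases ht : t = 0
  · subst ht
    have h := myS_tendsto hBb hbB hμ k (w := fun t => t⁻¹) my_inv_bound
    have h0 : myS v k 0 = 0 := if_neg (lt_irrefl 0)
    have h0' : myS v (k+1) 0 = 0 := if_neg (lt_irrefl 0)
    rw [CurveDerivAt, h0']
    simpa [h0] using h
  · rcases myS_local v ht with ⟨U, hU, j, hloc⟩ | ⟨U, hU, hloc⟩
    · have hder : CurveDerivAt (fun s => myG j k s • v j) (myG j (k+1) t • v j) t :=
        my_curveDerivAt_smul_const (v j) (myG_hasDeriv (myA j) k t)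
      have hval : myS v (k+1) t = myG j (k+1) t • v j := hloc t (mem_of_mem_nhds hU) (k+1)
      rw [hval]
      exact my_curveDerivAt_congr (eventually_of_mem hU fun s hs => hloc s hs k) hder
    · have hval : myS v (k+1) t = 0 := hloc t (mem_of_mem_nhds hU) (k+1)
      rw [hval]
      exact my_curveDerivAt_congr (eventually_of_mem hU fun s hs => hloc s hs k)
        (my_curveDerivAt_const 0 t)

lemma myS_cont (hBb : IsVonNBounded ℝ B) (hbB : ∀ j, b j ∈ B)
    (hμ : ∀ j, |μ j| ≤ myQ (j*j)) (k : ℕ) : Continuous (myS (fun j => μ j • b j) k) := by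
  set v : ℕ → E := fun j => μ j • b j with hv
  rw [continuous_iff_continuousAt]
  intro t
  by_cases ht : t = 0
  · subst ht
    have h0 : myS v k 0 = 0 := if_neg (lt_irrefl 0)
    rw [ContinuousAt, h0, ← nhdsNE_sup_pure]
    refine Tendsto.sup ?_ ?_
    · have h := myS_tendsto hBb hbB hμ k (w := fun _ => (1:ℝ))
        (fun t _ => by
          rw [abs_one]
          simpa using pow_le_pow_right₀ (by norm_num : (1:ℝ) ≤ 2) (Nat.zero_le (myJ t + 1)))
      simpa [one_smul] using h
    · have := tendsto_pure_nhds (myS v k) 0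
      rwa [h0] at this
  · rcases myS_local v ht with ⟨U, hU, j, hloc⟩ | ⟨U, hU, hloc⟩
    · exact ContinuousAt.congr (((myG_cont (myA j) k).smul continuous_const).continuousAt)
        (eventually_of_mem hU fun s hs => (hloc s hs k).symm)
    · exact ContinuousAt.congr continuousAt_const
        (eventually_of_mem hU fun s hs => (hloc s hs k).symm)
end curve2

noncomputable section curve3
variable {E : Type u} [AddCommGroup E] [Module ℝ E] [TopologicalSpace E]
  [IsTopologicalAddGroup E] [ContinuousSMul ℝ E]

lemma my_special_curve (x : E) (b : ℕ → E) (μ : ℕ → ℝ) (B : Set E)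
    (hBb : IsVonNBounded ℝ B) (hbB : ∀ j, b j ∈ B) (hμ : ∀ j, |μ j| ≤ myQ (j*j)) :
    ∃ c : ℝ → E, IsSmoothCurve c ∧ c 0 = x ∧ ∀ j, c (myQ j) = x + μ j • b j := by
  set v : ℕ → E := fun j => μ j • b j with hv
  set D : ℕ → ℝ → E := fun k t => (if k = 0 then x else 0) + myS v k t with hD
  have hS0 : ∀ k, myS v k 0 = 0 := fun k => if_neg (lt_irrefl 0)
  refine ⟨D 0, ⟨D, rfl, ?_, ?_⟩, ?_, ?_⟩
  · intro n t
    have h := myS_curveDeriv hBb hbB hμ n t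
    have hval : D (n+1) t = myS v (n+1) t := by simp [hD]
    rw [hval]
    exact my_curveDerivAt_const_add h
  · intro n
    exact continuous_const.add (myS_cont hBb hbB hμ n)
  · simp [hD, hS0 0]
  · intro j
    have hJ : myJ (myQ j) = j := by
      refine myJ_eq (myQ_pos j) (by nlinarith [myQ_pos j]) (fun i hi => ?_)
      have h1 : myQ j ≤ myQ (i+1) := myQ_anti hi
      have h2 : myQ (i+1) = myQ i / 2 := myQ_succ i
      have h3 := myQ_pos i
      nlinarith
    have hSval : myS v 0 (myQ j) = v j := by
      rw [myS, if_pos (myQ_pos j), hJ, myG, myAQ]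
      norm_num [iteratedDeriv_zero, myPhi_one]
    simp [hD, hSval]
    rfl
end curve3

end myAux

theorem cInf_closed_iff {E : Type*} [AddCommGroup E] [Module ℝ E] [TopologicalSpace E]
    [IsTopologicalAddGroup E] [ContinuousSMul ℝ E] [LocallyConvexSpace ℝ E] [T2Space E] (A : Set E) :
    @IsClosed E (cInfTopology E) A ↔
      ∀ y : ℕ → E, (∀ n, y n ∈ A) → ∀ x : E, MackeyConvSeq y x → x ∈ A := by
  rw [my_cinf_closed_iff]
  constructor
  · rintro hA y hy x ⟨B, ⟨hBc, hBbal⟩, hBbd, μ, hμt, hmem⟩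
    by_cases h0 : ∃ n, μ n = 0
    · obtain ⟨n, hn⟩ := h0
      obtain ⟨e, he, -⟩ := hmem n
      have h1 : y n - x ∈ (0:ℝ) • B := hn ▸ hmem n
      rw [Set.zero_smul_set ⟨e, he⟩, Set.mem_zero] at h1
      have hyx : y n = x := by rwa [sub_eq_zero] at h1
      rw [← hyx]
      exact hy n
    · have hchoice : ∀ j : ℕ, ∃ n, |μ n| ≤ myQ (j*j) := by
        intro j
        obtain ⟨N, hN⟩ := Metric.tendsto_atTop.1 hμt (myQ (j*j)) (myQ_pos _)
        refine ⟨N, ?_⟩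
        have := hN N le_rfl
        rw [Real.dist_eq, sub_zero] at this
        exact this.le
      choose ρ hρ using hchoice
      have hb : ∀ j, ∃ bb ∈ B, μ (ρ j) • bb = y (ρ j) - x := fun j => hmem (ρ j)
      choose b hbB hbv using hb
      obtain ⟨c, hc, hc0, hcj⟩ := my_special_curve x b (fun j => μ (ρ j)) B hBbd hbB hρ
      have hclosed := hA c hc
      have hmemA : ∀ j, myQ j ∈ c ⁻¹' A := by
        intro j
        rw [mem_preimage, hcj j, hbv j]
        simpa using hy (ρ j)
      have hlim : Tendsto myQ atTop (𝓝 (0:ℝ)) :=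
        tendsto_pow_atTop_nhds_zero_of_lt_one (by norm_num) (by norm_num)
      have h0mem : (0:ℝ) ∈ c ⁻¹' A :=
        hclosed.mem_of_tendsto hlim (Eventually.of_forall hmemA)
      rwa [mem_preimage, hc0] at h0mem
  · intro H c hc
    apply IsSeqClosed.isClosed
    intro u t hu hlim
    exact H (fun n => c (u n)) hu (c t) (my_mackey_of_smooth hc hlim)
end

section
/- Let E be a Fréchet space. Then the Mackey-closure (c^∞) topology on E coincides with the given metrizable locally convex topology. -/
open Filter Topology Set Bornology Pointwise

universe u v

namespace FCI

noncomputable def rr (n : ℕ) : ℝ := (2:ℝ)⁻¹ ^ n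

lemma rr_pos (n : ℕ) : 0 < rr n := pow_pos (by norm_num) n

lemma rr_zero : rr 0 = 1 := by simp [rr]

lemma rr_succ (n : ℕ) : rr (n+1) = rr n / 2 := by
  simp [rr, pow_succ]; ring

lemma rr_anti {m n : ℕ} (h : m ≤ n) : rr n ≤ rr m :=
  pow_le_pow_of_le_one (by norm_num) (by norm_num) h

lemma rr_strict {m n : ℕ} (h : m < n) : rr n < rr m :=
  pow_lt_pow_right_of_lt_one₀ (by norm_num) (by norm_num) h

lemma rr_lt_iff {m n : ℕ} : rr n < rr m ↔ m < n := by
  constructor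
  · intro h
    by_contra hc
    exact absurd (rr_anti (not_lt.mp hc)) (not_le.mpr h)
  · exact rr_strict

lemma rr_le_one (n : ℕ) : rr n ≤ 1 := by simpa [rr_zero] using rr_anti (Nat.zero_le n)

lemma rr_two_pow (n : ℕ) : rr n * 2^n = 1 := by
  simp [rr, ← mul_pow]

noncomputable def bf : ContDiffBump (0:ℝ) := ⟨1, 2, one_pos, one_lt_two⟩

noncomputable def bb (n : ℕ) : ℝ := 8 * 2^n

lemma bb_pos (n : ℕ) : 0 < bb n := by unfold bb; positivity

lemma bb_rr (n : ℕ) : bb n * rr n = 8 := by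
  have := rr_two_pow n
  unfold bb
  nlinarith

lemma bf_iteratedDeriv_zero (k : ℕ) {u : ℝ} (hu : 2 < |u|) :
    iteratedDeriv k (bf : ℝ → ℝ) u = 0 := by
  have hsub : tsupport (iteratedDeriv k (bf : ℝ → ℝ)) ⊆ Metric.closedBall 0 2 := by
    induction k with
    | zero => simp only [iteratedDeriv_zero]; exact bf.tsupport_eq.le
    | succ k ih => rw [iteratedDeriv_succ]; exact closure_minimal (support_deriv_subset.trans ih) Metric.isClosed_closedBall
  apply image_eq_zero_of_notMem_tsupport
  intro hmem
  have := hsub hmem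
  simp [Metric.mem_closedBall, Real.dist_eq] at this
  linarith

noncomputable def G (n k : ℕ) (t : ℝ) : ℝ :=
  bb n ^ k * iteratedDeriv k (bf : ℝ → ℝ) (bb n * (t - rr n))

lemma bf_smooth : ContDiff ℝ (⊤ : ℕ∞) (bf : ℝ → ℝ) := bf.contDiff

lemma G_hasDerivAt (n k : ℕ) (t : ℝ) : HasDerivAt (G n k) (G n (k+1) t) t := by
  have hdiff : Differentiable ℝ (iteratedDeriv k (bf : ℝ → ℝ)) :=
    bf_smooth.differentiable_iteratedDeriv k (by exact_mod_cast WithTop.coe_lt_top _)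
  have hinner : HasDerivAt (fun s : ℝ => bb n * (s - rr n)) (bb n) t := by
    simpa using ((hasDerivAt_id t).sub_const (rr n)).const_mul (bb n)
  have houter : HasDerivAt (iteratedDeriv k (bf : ℝ → ℝ))
      (iteratedDeriv (k+1) (bf : ℝ → ℝ) (bb n * (t - rr n))) (bb n * (t - rr n)) := by
    have := (hdiff (bb n * (t - rr n))).hasDerivAt
    rwa [← iteratedDeriv_succ] at this
  have := (houter.comp t hinner).const_mul (bb n ^ k)
  convert this using 1
  · rfl
  · rfl
  · rfl
  simp [G, pow_succ]
  ring

lemma G_cont (n k : ℕ) : Continuous (G n k) := by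
  apply Continuous.mul continuous_const
  exact (bf_smooth.continuous_iteratedDeriv k (by exact_mod_cast le_top)).comp
    (by continuity)

lemma G_zero {n k : ℕ} {t : ℝ} (h : t ∉ Set.Icc (3/4 * rr n) (5/4 * rr n)) :
    G n k t = 0 := by
  have h8 := bb_rr n
  have hb := bb_pos n
  have hr := rr_pos n
  have habs : 2 < |bb n * (t - rr n)| := by
    rw [abs_mul, abs_of_pos hb]
    simp only [Set.mem_Icc, not_and_or, not_le] at h
    rcases h with h | h
    · have : rr n / 4 < |t - rr n| := by
        rw [abs_sub_comm, abs_of_pos (by linarith)]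
        linarith
      calc (2:ℝ) = bb n * (rr n / 4) := by rw [show bb n * (rr n / 4) = bb n * rr n / 4 by ring, h8]; norm_num
        _ < bb n * |t - rr n| := mul_lt_mul_of_pos_left this hb
    · have : rr n / 4 < |t - rr n| := by
        rw [abs_of_pos (by linarith)]; linarith
      calc (2:ℝ) = bb n * (rr n / 4) := by rw [show bb n * (rr n / 4) = bb n * rr n / 4 by ring, h8]; norm_num
        _ < bb n * |t - rr n| := mul_lt_mul_of_pos_left this hb
  simp [G, bf_iteratedDeriv_zero k habs]

lemma G_bound (k : ℕ) : ∃ A : ℝ, 0 < A ∧ ∀ n t, |G n k t| ≤ A * 2^(k*n) := by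
  have hcs : HasCompactSupport (iteratedDeriv k (bf : ℝ → ℝ)) := by
    induction k with
    | zero => simpa [iteratedDeriv_zero] using bf.hasCompactSupport
    | succ k ih => rw [iteratedDeriv_succ]; exact ih.deriv
  obtain ⟨C, hC⟩ := hcs.exists_bound_of_continuous
    (bf_smooth.continuous_iteratedDeriv k (by exact_mod_cast le_top))
  refine ⟨8^k * |C| + 1, by positivity, fun n t => ?_⟩
  have h1 : |G n k t| ≤ (bb n)^k * |C| := by
    rw [G, abs_mul, abs_pow, abs_of_pos (bb_pos n)]
    have := hC (bb n * (t - rr n))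
    simp only [Real.norm_eq_abs] at this
    exact mul_le_mul_of_nonneg_left (this.trans (le_abs_self C))
      (pow_nonneg (bb_pos n).le k)
  have h2 : (bb n)^k = 8^k * 2^(k*n) := by
    rw [bb, mul_pow, ← pow_mul, mul_comm n k]
  nlinarith [pow_pos (show (0:ℝ) < 2 by norm_num) (k*n), pow_pos (show (0:ℝ) < 8 by norm_num) k, abs_nonneg C]


def Io (n : ℕ) : Set ℝ := Set.Ioo (7/10 * rr n) (13/10 * rr n)

lemma Io_unique {t : ℝ} {n m : ℕ} (hn : t ∈ Io n) (hm : t ∈ Io m) : n = m := by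
  rcases lt_trichotomy n m with h | h | h
  · exfalso
    have h1 : rr m ≤ rr n / 2 := by
      calc rr m ≤ rr (n+1) := rr_anti h
        _ = rr n / 2 := rr_succ n
    have := hn.1; have := hm.2; have := rr_pos n
    simp only [Io, Set.mem_Ioo] at *
    linarith
  · exact h
  · exfalso
    have h1 : rr n ≤ rr m / 2 := by
      calc rr n ≤ rr (m+1) := rr_anti h
        _ = rr m / 2 := rr_succ m
    have := rr_pos m
    simp only [Io, Set.mem_Ioo] at hn hm
    linarith

variable {E : Type*} [AddCommGroup E] [Module ℝ E]

open Classical in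
noncomputable def Dc (x : E) (y : ℕ → E) (k : ℕ) (t : ℝ) : E :=
  (if k = 0 then x else 0) +
    (if h : ∃ n, t ∈ Io n then G h.choose k t • (y h.choose - x) else 0)

lemma Dc_eq_of_mem (x : E) (y : ℕ → E) {t : ℝ} {n : ℕ} (hn : t ∈ Io n) (k : ℕ) :
    Dc x y k t = (if k = 0 then x else 0) + G n k t • (y n - x) := by
  have hex : ∃ m, t ∈ Io m := ⟨n, hn⟩
  have : hex.choose = n := Io_unique hex.choose_spec hn
  rw [Dc, dif_pos hex, this]

lemma Dc_eq_of_not (x : E) (y : ℕ → E) {t : ℝ} (h : ¬ ∃ n, t ∈ Io n) (k : ℕ) :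
    Dc x y k t = (if k = 0 then x else 0) := by
  rw [Dc, dif_neg h, add_zero]

lemma not_mem_Io_of_nonpos {t : ℝ} (ht : t ≤ 0) : ¬ ∃ n, t ∈ Io n := by
  rintro ⟨n, hn⟩
  have := rr_pos n
  simp only [Io, Set.mem_Ioo] at hn
  linarith [hn.1]

lemma Dc_at_zero (x : E) (y : ℕ → E) (k : ℕ) :
    Dc x y k 0 = (if k = 0 then x else 0) :=
  Dc_eq_of_not x y (not_mem_Io_of_nonpos le_rfl) k

/-- Localization away from `0`. -/
lemma Dc_loc (x : E) (y : ℕ → E) {t : ℝ} (ht : t ≠ 0) :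
    ∃ n, ∃ ε > 0, ∀ s, |s - t| < ε → ∀ k,
      Dc x y k s = (if k = 0 then x else 0) + G n k s • (y n - x) := by
  by_cases h : ∃ n, t ∈ Io n
  · obtain ⟨n, hn⟩ := h
    simp only [Io, Set.mem_Ioo] at hn
    refine ⟨n, min (t - 7/10 * rr n) (13/10 * rr n - t), by
      simp only [lt_min_iff]; constructor <;> linarith, fun s hs k => ?_⟩
    rw [abs_sub_lt_iff, lt_min_iff, lt_min_iff] at hs
    exact Dc_eq_of_mem x y ⟨by linarith [hs.2.1], by linarith [hs.1.1]⟩ k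
  · -- `t` lies in a gap; find a ball avoiding all the closed supports
    have hgap : ∃ ε > 0, ∀ s, |s - t| < ε → ∀ m,
        s ∉ Set.Icc (3/4 * rr m) (5/4 * rr m) := by
      rcases lt_trichotomy t 0 with htneg | htz | htpos
      · refine ⟨-t, by linarith, fun s hs m hmem => ?_⟩
        have := rr_pos m
        have hs' : s < 0 := by
          have := abs_sub_lt_iff.mp hs
          linarith [this.1]
        have := hmem.1
        linarith
      · exact absurd htz ht
      · by_cases hbig : 5/4 < t
        · refine ⟨t - 5/4, by linarith, fun s hs m hmem => ?_⟩
          have h1 : 5/4 * rr m ≤ 5/4 := by nlinarith [rr_le_one m, rr_pos m]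
          have := abs_sub_lt_iff.mp hs
          have := hmem.2
          linarith [this]
        · push_neg at hbig
          have hex : ∃ n, 7/10 * rr n < t := by
            obtain ⟨n, hn⟩ := exists_pow_lt_of_lt_one (show (0:ℝ) < 10/7 * t by linarith)
              (show (2:ℝ)⁻¹ < 1 by norm_num)
            exact ⟨n, by rw [show rr n = (2:ℝ)⁻¹ ^ n from rfl]; linarith⟩
          classical
          set n := Nat.find hex with hndef
          have hn : 7/10 * rr n < t := Nat.find_spec hex
          have hmin : ∀ m, m < n → t ≤ 7/10 * rr m := by
            intro m hm
            have := Nat.find_min hex hm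
            linarith [not_lt.mp this]
          have hn0 : n ≠ 0 := by
            intro h0
            have h1 : 7/10 < t := by
              have := hn; rw [h0, rr_zero] at this; linarith
            have h2 : ¬ t ∈ Io 0 := fun hc => h ⟨0, hc⟩
            simp only [Io, Set.mem_Ioo, rr_zero, not_and_or, not_lt] at h2
            rcases h2 with h2 | h2 <;> linarith
          have hub : t ≤ 7/5 * rr n := by
            obtain ⟨m, hm⟩ := Nat.exists_eq_succ_of_ne_zero hn0
            have h1 := hmin m (by omega)
            have h2 : rr m = 2 * rr n := by rw [hm, rr_succ m]; ring
            rw [h2] at h1; linarith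
          have hlb : 13/10 * rr n ≤ t := by
            have h2 : ¬ t ∈ Io n := fun hc => h ⟨n, hc⟩
            simp only [Io, Set.mem_Ioo, not_and_or, not_lt] at h2
            rcases h2 with h2 | h2 <;> linarith
          refine ⟨rr n / 20, by linarith [rr_pos n], fun s hs m hmem => ?_⟩
          have hs' := abs_sub_lt_iff.mp hs
          have hs1 : 5/4 * rr n < s := by linarith [hs'.2]
          have hs2 : s < 29/20 * rr n := by linarith [hs'.1]
          rcases le_or_gt n m with hcase | hcase
          · have : rr m ≤ rr n := rr_anti hcase
            have := hmem.2
            nlinarith [rr_pos n]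
          · have hmn : m ≤ n - 1 := Nat.le_pred_of_lt hcase
            have h2 : rr (n-1) ≤ rr m := rr_anti hmn
            have h3 : rr (n-1) = 2 * rr n := by
              have he : n - 1 + 1 = n := Nat.succ_pred_eq_of_ne_zero hn0
              have := rr_succ (n-1)
              rw [he] at this
              linarith
            have := hmem.1
            nlinarith [rr_pos n]
    obtain ⟨ε, hε, hgap⟩ := hgap
    refine ⟨0, ε, hε, fun s hs k => ?_⟩
    have hG : ∀ m, G m k s = 0 := fun m => G_zero (hgap s hs m)
    by_cases hsm : ∃ m, s ∈ Io m
    · obtain ⟨m, hm⟩ := hsm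
      rw [Dc_eq_of_mem x y hm, hG, hG, zero_smul, zero_smul]
    · rw [Dc_eq_of_not x y hsm, hG, zero_smul, add_zero]


lemma rr_inv (n : ℕ) : (rr n)⁻¹ = 2^n := by
  rw [rr, ← inv_pow, inv_inv]

section Top

variable {E : Type*} [AddCommGroup E] [Module ℝ E] [TopologicalSpace E]
  [IsTopologicalAddGroup E] [ContinuousSMul ℝ E]

lemma tendstoAux (x : E) (y : ℕ → E)
    (hfast : ∀ k : ℕ, Tendsto (fun n => ((2:ℝ)^(k*n)) • (y n - x)) atTop (𝓝 0))
    (k : ℕ) {K : ℝ} (hK : 0 < K) (g : ℝ → E)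
    (hg : ∀ s, g s = 0 ∨ ∃ n, s ∈ Io n ∧ ∃ a : ℝ,
      |a| ≤ K * 2^((k+1)*n) ∧ g s = a • (y n - x)) :
    Tendsto g (𝓝 0) (𝓝 0) := by
  rw [(nhds_basis_balanced ℝ E).tendsto_right_iff]
  rintro W ⟨hW, hWbal⟩
  have hw : Tendsto (fun n => (K * 2^((k+2)*n)) • (y n - x)) atTop (𝓝 0) := by
    have := (hfast (k+2)).const_smul K
    simpa [smul_smul, smul_zero] using this
  have hev : ∀ᶠ n in atTop, (K * 2^((k+2)*n)) • (y n - x) ∈ W :=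
    hw.eventually (eventually_mem_set.mpr hW)
  obtain ⟨M, hM⟩ := eventually_atTop.mp hev
  have hδ : (0:ℝ) < 7/10 * rr M := by have := rr_pos M; linarith
  filter_upwards [Metric.ball_mem_nhds (0:ℝ) hδ] with s hs
  rcases hg s with h0 | ⟨n, hsn, a, ha, hgs⟩
  · rw [h0]; exact mem_of_mem_nhds hW
  · have hsM : |s| < 7/10 * rr M := by
      simpa [Real.dist_eq] using hs
    have h1 : 7/10 * rr n < s := hsn.1
    have hnM : M ≤ n := by
      have h2 : rr n < rr M := by nlinarith [le_abs_self s]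
      exact (rr_lt_iff.mp h2).le
    have hcpos : (0:ℝ) < K * 2^((k+2)*n) := by positivity
    have hrw : g s = (a / (K * 2^((k+2)*n))) • ((K * 2^((k+2)*n)) • (y n - x)) := by
      rw [smul_smul, div_mul_cancel₀ _ hcpos.ne', hgs]
    rw [hrw]
    refine hWbal.smul_mem ?_ (hM n hnM)
    rw [Real.norm_eq_abs, abs_div, abs_of_pos hcpos, div_le_one hcpos]
    calc |a| ≤ K * 2^((k+1)*n) := ha
      _ ≤ K * 2^((k+2)*n) := by
          apply mul_le_mul_of_nonneg_left _ hK.le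
          exact pow_le_pow_right₀ (by norm_num) (Nat.mul_le_mul_right n (by omega))

lemma Dc_cont_zero (x : E) (y : ℕ → E)
    (hfast : ∀ k : ℕ, Tendsto (fun n => ((2:ℝ)^(k*n)) • (y n - x)) atTop (𝓝 0))
    (k : ℕ) : ContinuousAt (Dc x y k) 0 := by
  obtain ⟨A, hA, hAb⟩ := G_bound k
  have key : Tendsto (fun s => Dc x y k s - (if k = 0 then x else 0)) (𝓝 0) (𝓝 0) := by
    refine tendstoAux x y hfast k hA _ (fun s => ?_)
    by_cases hsm : ∃ n, s ∈ Io n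
    · obtain ⟨n, hn⟩ := hsm
      refine Or.inr ⟨n, hn, G n k s, ?_, by rw [Dc_eq_of_mem x y hn, add_sub_cancel_left]⟩
      calc |G n k s| ≤ A * 2^(k*n) := hAb n s
        _ ≤ A * 2^((k+1)*n) := by
            apply mul_le_mul_of_nonneg_left _ hA.le
            exact pow_le_pow_right₀ (by norm_num) (Nat.mul_le_mul_right n (by omega))
    · exact Or.inl (by rw [Dc_eq_of_not x y hsm, sub_self])
  have h2 := key.add_const (if k = 0 then x else 0)
  simp only [sub_add_cancel, zero_add] at h2
  unfold ContinuousAt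
  rwa [Dc_at_zero]

lemma Dc_deriv_zero (x : E) (y : ℕ → E)
    (hfast : ∀ k : ℕ, Tendsto (fun n => ((2:ℝ)^(k*n)) • (y n - x)) atTop (𝓝 0))
    (k : ℕ) : CurveDerivAt (Dc x y k) (Dc x y (k+1) 0) 0 := by
  obtain ⟨A, hA, hAb⟩ := G_bound k
  have hK : (0:ℝ) < 2 * A := by linarith
  have key : Tendsto (fun h : ℝ => h⁻¹ • (Dc x y k h - (if k = 0 then x else 0)))
      (𝓝 0) (𝓝 0) := by
    refine tendstoAux x y hfast k hK _ (fun s => ?_)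
    by_cases hsm : ∃ n, s ∈ Io n
    · obtain ⟨n, hn⟩ := hsm
      refine Or.inr ⟨n, hn, s⁻¹ * G n k s, ?_, ?_⟩
      · have hs0 : 7/10 * rr n < s := hn.1
        have hrpos := rr_pos n
        have hspos : 0 < s := by linarith
        have hinv : |s⁻¹| ≤ 2 * 2^n := by
          rw [abs_of_pos (inv_pos.mpr hspos)]
          have h1 : s⁻¹ ≤ (7/10 * rr n)⁻¹ := by
            apply inv_anti₀ (by linarith) hs0.le
          have h2 : (7/10 * rr n)⁻¹ = 10/7 * 2^n := by
            rw [mul_inv, rr_inv]; norm_num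
          rw [h2] at h1
          have h3 : (0:ℝ) < 2^n := by positivity
          linarith
        calc |s⁻¹ * G n k s| = |s⁻¹| * |G n k s| := abs_mul _ _
          _ ≤ (2 * 2^n) * (A * 2^(k*n)) := by
              apply mul_le_mul hinv (hAb n s) (abs_nonneg _) (by positivity)
          _ = 2 * A * 2^((k+1)*n) := by
              rw [show (k+1)*n = k*n + n by ring, pow_add]; ring
      · rw [Dc_eq_of_mem x y hn, add_sub_cancel_left, smul_smul]
    · exact Or.inl (by rw [Dc_eq_of_not x y hsm, sub_self, smul_zero])
  unfold CurveDerivAt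
  have hz : Dc x y (k+1) 0 = 0 := by rw [Dc_at_zero]; simp
  rw [hz]
  refine Tendsto.mono_left ?_ nhdsWithin_le_nhds
  have : Dc x y k 0 = (if k = 0 then x else 0) := Dc_at_zero x y k
  simpa [this, zero_add] using key

lemma Dc_cont (x : E) (y : ℕ → E)
    (hfast : ∀ k : ℕ, Tendsto (fun n => ((2:ℝ)^(k*n)) • (y n - x)) atTop (𝓝 0))
    (k : ℕ) : Continuous (Dc x y k) := by
  rw [continuous_iff_continuousAt]
  intro t
  by_cases ht : t = 0
  · subst ht; exact Dc_cont_zero x y hfast k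
  · obtain ⟨n, ε, hε, hloc⟩ := Dc_loc x y ht
    have hnice : ContinuousAt (fun s => (if k = 0 then x else 0) + G n k s • (y n - x)) t :=
      (continuous_const.add ((G_cont n k).smul continuous_const)).continuousAt
    refine hnice.congr ?_
    filter_upwards [Metric.ball_mem_nhds t hε] with s hs
    exact (hloc s (by simpa [Real.dist_eq] using hs) k).symm

lemma Dc_deriv (x : E) (y : ℕ → E)
    (hfast : ∀ k : ℕ, Tendsto (fun n => ((2:ℝ)^(k*n)) • (y n - x)) atTop (𝓝 0))
    (k : ℕ) (t : ℝ) : CurveDerivAt (Dc x y k) (Dc x y (k+1) t) t := by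
  by_cases ht : t = 0
  · subst ht; exact Dc_deriv_zero x y hfast k
  · obtain ⟨n, ε, hε, hloc⟩ := Dc_loc x y ht
    have hval : Dc x y (k+1) t = G n (k+1) t • (y n - x) := by
      rw [hloc t (by simpa using hε) (k+1)]; simp
    have hd : Tendsto (fun h : ℝ => h⁻¹ • (G n k (t+h) - G n k t)) (𝓝[≠] 0)
        (𝓝 (G n (k+1) t)) :=
      hasDerivAt_iff_tendsto_slope_zero.mp (G_hasDerivAt n k t)
    have hsm := hd.smul_const (y n - x)
    unfold CurveDerivAt
    rw [hval]
    refine Tendsto.congr' ?_ hsm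
    have hev : ∀ᶠ h : ℝ in 𝓝[≠] 0, |h| < ε := by
      apply eventually_nhdsWithin_of_eventually_nhds
      filter_upwards [Metric.ball_mem_nhds (0:ℝ) hε] with h hh
      simpa [Real.dist_eq] using hh
    filter_upwards [hev] with h hh
    have h1 : Dc x y k (t + h) = (if k = 0 then x else 0) + G n k (t+h) • (y n - x) :=
      hloc (t+h) (by simpa [abs_sub_comm] using hh) k
    have h2 : Dc x y k t = (if k = 0 then x else 0) + G n k t • (y n - x) :=
      hloc t (by simpa using hε) k
    rw [h1, h2]
    simp only [add_sub_add_left_eq_sub, ← sub_smul, smul_smul, smul_eq_mul]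

lemma Dc_smooth (x : E) (y : ℕ → E)
    (hfast : ∀ k : ℕ, Tendsto (fun n => ((2:ℝ)^(k*n)) • (y n - x)) atTop (𝓝 0)) :
    IsSmoothCurve (Dc x y 0) :=
  ⟨Dc x y, rfl, fun k t => Dc_deriv x y hfast k t, fun k => Dc_cont x y hfast k⟩

end Top


lemma Dc_apply_rr {E : Type*} [AddCommGroup E] [Module ℝ E] (x : E) (y : ℕ → E) (n : ℕ) :
    Dc x y 0 (rr n) = y n := by
  have hmem : rr n ∈ Io n := by
    have := rr_pos n
    constructor <;> [linarith; linarith]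
  rw [Dc_eq_of_mem x y hmem]
  have hG : G n 0 (rr n) = 1 := by
    rw [G, pow_zero, one_mul, sub_self, mul_zero, iteratedDeriv_zero]
    exact bf.one_of_mem_closedBall (by simp [bf])
  rw [hG, if_pos rfl, one_smul]
  abel

lemma exists_fast {E : Type*} [AddCommGroup E] [Module ℝ E] [TopologicalSpace E]
    [IsTopologicalAddGroup E] [ContinuousSMul ℝ E]
    [FirstCountableTopology E]
    (x : E) (U : Set E) (hx : U ∉ 𝓝 x) :
    ∃ y : ℕ → E, (∀ n, y n ∉ U) ∧
      ∀ k : ℕ, Tendsto (fun n => ((2:ℝ)^(k*n)) • (y n - x)) atTop (𝓝 0) := by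
  obtain ⟨s, hs⟩ := (𝓝 x).exists_antitone_basis
  have hp : ∀ n, ∃ q, q ∈ s n ∧ q ∉ U := by
    intro n
    by_contra hc
    push_neg at hc
    exact hx (mem_of_superset (hs.mem n) hc)
  choose p hps hpU using hp
  have hptend : Tendsto p atTop (𝓝 x) := hs.tendsto hps
  obtain ⟨B, hB⟩ := (𝓝 (0:E)).exists_antitone_basis
  have hsel : ∀ j : ℕ, ∃ N, ∀ m ≤ j, ((2:ℝ)^(m*j)) • (p N - x) ∈ B j := by
    intro j
    have hvec : Tendsto (fun n => p n - x) atTop (𝓝 0) := by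
      simpa using hptend.sub (tendsto_const_nhds (x := x))
    have hall : ∀ᶠ n in atTop, ∀ m ∈ Finset.range (j+1),
        ((2:ℝ)^(m*j)) • (p n - x) ∈ B j := by
      rw [eventually_all_finset]
      intro m _
      have := hvec.const_smul ((2:ℝ)^(m*j))
      rw [smul_zero] at this
      exact this.eventually (eventually_mem_set.mpr (hB.mem j))
    obtain ⟨N, hN⟩ := hall.exists
    exact ⟨N, fun m hm => hN m (Finset.mem_range.mpr (by omega))⟩
  choose N hN using hsel
  refine ⟨fun j => p (N j), fun j => hpU (N j), fun k => ?_⟩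
  rw [hB.toHasBasis.tendsto_right_iff]
  intro i _
  filter_upwards [eventually_ge_atTop (max i k)] with j hj
  have h1 : ((2:ℝ)^(k*j)) • (p (N j) - x) ∈ B j := hN j k (le_trans (le_max_right i k) hj)
  exact hB.antitone (le_trans (le_max_left i k) hj) h1

end FCI

theorem frechet_cInf_eq_given {E : Type*} [AddCommGroup E] [Module ℝ E]
    [UniformSpace E] [IsUniformAddGroup E] [ContinuousSMul ℝ E] [LocallyConvexSpace ℝ E]
    [TopologicalSpace.MetrizableSpace E] [CompleteSpace E] :
    cInfTopology E = (inferInstance : TopologicalSpace E) := by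
  refine le_antisymm (iSup_le fun c => ?_) ?_
  · refine continuous_iff_coinduced_le.mp ?_
    obtain ⟨D, hD0, -, hcont⟩ := c.2
    exact hD0 ▸ hcont 0
  · have hpre : ∀ U : Set E, IsOpen[cInfTopology E] U →
        ∀ c : ℝ → E, IsSmoothCurve c → IsOpen (c ⁻¹' U) := by
      intro U hU c hc
      unfold cInfTopology at hU
      exact isOpen_coinduced.mp (isOpen_iSup_iff.mp hU ⟨c, hc⟩)
    rw [TopologicalSpace.le_def]
    intro U hU
    rw [isOpen_iff_mem_nhds]
    intro x hxU
    by_contra hmem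
    obtain ⟨y, hyU, hfast⟩ := FCI.exists_fast x U hmem
    have hopen := hpre U hU _ (FCI.Dc_smooth x y hfast)
    have h0 : (0:ℝ) ∈ (FCI.Dc x y 0) ⁻¹' U := by
      rw [Set.mem_preimage, FCI.Dc_at_zero, if_pos rfl]
      exact hxU
    obtain ⟨ε, hε, hball⟩ := Metric.isOpen_iff.mp hopen 0 h0
    obtain ⟨n, hn⟩ := exists_pow_lt_of_lt_one hε (show (2:ℝ)⁻¹ < 1 by norm_num)
    have hrmem : FCI.rr n ∈ Metric.ball (0:ℝ) ε := by
      have := FCI.rr_pos n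
      simp only [Metric.mem_ball, Real.dist_eq, sub_zero, abs_of_pos this]
      exact hn
    have hU' := hball hrmem
    rw [Set.mem_preimage, FCI.Dc_apply_rr] at hU'
    exact hyU n hU'
end

section
/- Let E be a locally convex space and U an absolutely convex subset of E containing 0 which is open in the Mackey-closure (c^∞) topology. Then U absorbs every bounded subset of E, i.e., for every bounded B ⊆ E there exists λ > 0 with B ⊆ λU. -/
open Filter Topology Set Bornology Pointwise
open scoped ContDiff

universe u v

noncomputable section AuxCurve

/-- A fixed smooth bump function on `ℝ`: `1` near `0`, supported in `[-1,1]`. -/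
def ψb : ContDiffBump (0:ℝ) := ⟨1/2, 1, by norm_num, by norm_num⟩

/-- Iterated derivatives of the bump function. -/
def Ψ (k : ℕ) : ℝ → ℝ := iteratedDeriv k (fun x => ψb x)

lemma Ψ_contDiff (k : ℕ) : ContDiff ℝ ∞ (Ψ k) := by
  rw [Ψ, iteratedDeriv_eq_iterate]
  exact ContDiff.iterate_deriv k ψb.contDiff

lemma Ψ_cont (k : ℕ) : Continuous (Ψ k) := (Ψ_contDiff k).continuous

lemma Ψ_hasDerivAt (k : ℕ) (t : ℝ) : HasDerivAt (Ψ k) (Ψ (k+1) t) t := by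
  have h := ((Ψ_contDiff k).differentiable (by simp)).differentiableAt (x := t)
  have := h.hasDerivAt
  rwa [show deriv (Ψ k) t = Ψ (k+1) t by rw [Ψ, Ψ, iteratedDeriv_succ]] at this

lemma Ψ_zero_eq : Ψ 0 (0:ℝ) = 1 := by
  rw [Ψ, iteratedDeriv_zero]
  exact ψb.one_of_mem_closedBall (by simp [ψb])

lemma Ψ_tsupport (k : ℕ) : tsupport (Ψ k) ⊆ Metric.closedBall (0:ℝ) 1 := by
  induction k with
  | zero =>
    rw [Ψ, iteratedDeriv_zero]
    have : tsupport (fun x => ψb x) = Metric.closedBall 0 ψb.rOut := ψb.tsupport_eq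
    rw [this]
    simp [ψb]
  | succ n ih =>
    rw [Ψ, iteratedDeriv_succ, ← Ψ]
    exact subset_trans (closure_minimal support_deriv_subset isClosed_closure) ih

lemma Ψ_support (k : ℕ) {x : ℝ} (hx : Ψ k x ≠ 0) : |x| ≤ 1 := by
  have : x ∈ tsupport (Ψ k) := subset_closure (by exact hx)
  have := Ψ_tsupport k this
  simpa [Real.norm_eq_abs] using Metric.mem_closedBall.mp this

lemma Ψ_bound (k : ℕ) : ∃ C, 0 < C ∧ ∀ x, |Ψ k x| ≤ C := by
  have hcs : HasCompactSupport (Ψ k) :=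
    HasCompactSupport.of_support_subset_isCompact (K := Metric.closedBall (0:ℝ) 1)
      (isCompact_closedBall _ _) (subset_trans subset_closure (Ψ_tsupport k))
  obtain ⟨C, hC⟩ := hcs.exists_bound_of_continuous (Ψ_cont k)
  exact ⟨max C 1, by positivity, fun x => le_trans (by simpa using hC x) (le_max_left _ _)⟩

end AuxCurve

noncomputable section Curve

open Finset in
/-- scaling coefficients -/
def μc (n : ℕ) : ℝ := ((2:ℝ) ^ (n * n))⁻¹

lemma μc_pos (n : ℕ) : 0 < μc n := by rw [μc]; positivity

/-- coefficient functions of the special curve and its derivatives -/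
def gco (k n : ℕ) (t : ℝ) : ℝ := (4 * 2 ^ n : ℝ) ^ k * Ψ k (4 * 2 ^ n * t - 4)

lemma gco_cont (k n : ℕ) : Continuous (gco k n) :=
  continuous_const.mul ((Ψ_cont k).comp (by continuity))

lemma gco_hasDerivAt (k n : ℕ) (t : ℝ) : HasDerivAt (gco k n) (gco (k+1) n t) t := by
  have h1 : HasDerivAt (fun t : ℝ => 4 * 2 ^ n * t - 4) (4 * 2 ^ n) t := by
    simpa using ((hasDerivAt_id t).const_mul (4 * 2 ^ n : ℝ)).sub_const 4
  have h2 := (Ψ_hasDerivAt k (4 * 2 ^ n * t - 4)).comp t h1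
  have h3 := h2.const_mul ((4 * 2 ^ n : ℝ) ^ k)
  convert h3 using 1
  · rfl
  · rfl
  · rfl
  rw [gco]
  ring

lemma gco_mem (k n : ℕ) {t : ℝ} (h : gco k n t ≠ 0) :
    3 ≤ 4 * 2 ^ n * t ∧ 4 * 2 ^ n * t ≤ 5 := by
  have hne : Ψ k (4 * 2 ^ n * t - 4) ≠ 0 := by
    intro h0; exact h (by rw [gco, h0, mul_zero])
  have := Ψ_support k hne
  rw [abs_le] at this
  constructor <;> linarith [this.1, this.2]

lemma gco_t_pos (k n : ℕ) {t : ℝ} (h : gco k n t ≠ 0) : 0 < t := by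
  have h1 := (gco_mem k n h).1
  nlinarith [pow_pos (by norm_num : (0:ℝ) < 2) n]

lemma gco_zero_of_le (k n : ℕ) {t : ℝ} (h : (⌈2 / t⌉₊ : ℕ) ≤ n) : gco k n t = 0 := by
  by_contra hne
  have ht : 0 < t := gco_t_pos k n hne
  have h5 := (gco_mem k n hne).2
  have hn : 2 / t ≤ (n : ℝ) := by
    have := Nat.ceil_le.mp h
    exact this
  have hpow : (n : ℝ) < 2 ^ n := by exact_mod_cast Nat.lt_two_pow_self
  have : 2 / t < 2 ^ n := lt_of_le_of_lt hn hpow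
  have h2 : 2 < 2 ^ n * t := by
    rwa [div_lt_iff₀ ht] at this
  nlinarith

lemma gco_unique {k j m n : ℕ} {t : ℝ} (hm : gco k m t ≠ 0) (hn : gco j n t ≠ 0) : m = n := by
  have h1 := gco_mem k m hm
  have h2 := gco_mem j n hn
  have ht : 0 < t := gco_t_pos k m hm
  rcases lt_trichotomy m n with h | h | h
  · exfalso
    have : (2:ℝ) * 2 ^ m ≤ 2 ^ n := by
      calc (2:ℝ) * 2 ^ m = 2 ^ (m+1) := by ring
      _ ≤ 2 ^ n := pow_le_pow_right₀ one_le_two h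
    nlinarith [h1.1, h2.2]
  · exact h
  · exfalso
    have : (2:ℝ) * 2 ^ n ≤ 2 ^ m := by
      calc (2:ℝ) * 2 ^ n = 2 ^ (n+1) := by ring
      _ ≤ 2 ^ m := pow_le_pow_right₀ one_le_two h
    nlinarith [h1.2, h2.1]

set_option linter.unusedSectionVars false

variable {E : Type*} [AddCommGroup E] [Module ℝ E] [TopologicalSpace E]

/-- The special curve (k = 0) and its candidate derivatives. -/
def Dc (y : ℕ → E) (k : ℕ) (t : ℝ) : E :=
  ∑ n ∈ Finset.range ⌈2 / t⌉₊, gco k n t • y n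

lemma Dc_eq_sum (y : ℕ → E) (k : ℕ) {t : ℝ} {M : ℕ} (h : ⌈2 / t⌉₊ ≤ M) :
    Dc y k t = ∑ n ∈ Finset.range M, gco k n t • y n := by
  rw [Dc]
  refine Finset.sum_subset (Finset.range_subset_range.2 h) (fun n _ hn => ?_)
  rw [gco_zero_of_le k n (by simpa using Finset.mem_range.not.mp hn), zero_smul]

lemma Dc_nonpos (y : ℕ → E) (k : ℕ) {t : ℝ} (ht : t ≤ 0) : Dc y k t = 0 := by
  rw [Dc]
  refine Finset.sum_eq_zero fun n _ => ?_
  rcases eq_or_lt_of_le ht with h | h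
  · have : gco k n t = 0 := by
      by_contra hne; exact absurd (gco_t_pos k n hne) (by simp [← h])
    rw [this, zero_smul]
  · have : gco k n t = 0 := by
      by_contra hne; exact absurd (gco_t_pos k n hne) (not_lt.mpr ht)
    rw [this, zero_smul]

lemma Dc_zero (y : ℕ → E) (k : ℕ) : Dc y k 0 = 0 := Dc_nonpos y k le_rfl

lemma Dc_single (y : ℕ → E) (k : ℕ) (t : ℝ) :
    Dc y k t = 0 ∨ ∃ n, gco k n t ≠ 0 ∧ Dc y k t = gco k n t • y n := by
  by_cases hz : ∀ n ∈ Finset.range ⌈2 / t⌉₊, gco k n t = 0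
  · left; exact Finset.sum_eq_zero fun n hn => by rw [hz n hn, zero_smul]
  · right
    push_neg at hz
    obtain ⟨n, hn, hne⟩ := hz
    refine ⟨n, hne, ?_⟩
    rw [Dc]
    refine Finset.sum_eq_single_of_mem n hn (fun m _ hmn => ?_)
    by_cases hm : gco k m t = 0
    · rw [hm, zero_smul]
    · exact absurd (gco_unique hm hne) hmn

lemma Dc_value (y : ℕ → E) (n : ℕ) : Dc y 0 (((2:ℝ) ^ n)⁻¹) = y n := by
  have hpow : (0:ℝ) < 2 ^ n := by positivity
  have hval : gco 0 n (((2:ℝ) ^ n)⁻¹) = 1 := by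
    rw [gco]
    have : 4 * (2:ℝ) ^ n * ((2:ℝ) ^ n)⁻¹ - 4 = 0 := by
      field_simp; ring
    rw [this, pow_zero, one_mul, Ψ_zero_eq]
  have hmem : n ∈ Finset.range ⌈2 / ((2:ℝ) ^ n)⁻¹⌉₊ := by
    rw [Finset.mem_range]
    have h1 : (2:ℝ) / ((2:ℝ) ^ n)⁻¹ = 2 * 2 ^ n := by field_simp
    have h2 : (n:ℝ) < 2 * 2 ^ n := by
      have : (n:ℝ) < 2 ^ n := by exact_mod_cast Nat.lt_two_pow_self
      nlinarith
    rw [← Nat.lt_ceil] at h2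
    rwa [h1]
  rw [Dc]
  rw [Finset.sum_eq_single_of_mem n hmem (fun m _ hmn => ?_), hval, one_smul]
  by_cases hm : gco 0 m (((2:ℝ) ^ n)⁻¹) = 0
  · rw [hm, zero_smul]
  · exact absurd (gco_unique hm (by rw [hval]; norm_num)) hmn

end Curve

noncomputable section Analysis


lemma quot_tendsto {f : ℝ → ℝ} {v t₀ : ℝ} (h : HasDerivAt f v t₀) :
    Filter.Tendsto (fun h : ℝ => h⁻¹ * (f (t₀ + h) - f t₀)) (𝓝[≠] (0:ℝ)) (𝓝 v) := by
  have hmap : Filter.Tendsto (fun h : ℝ => t₀ + h) (𝓝[≠] (0:ℝ)) (𝓝[≠] t₀) := by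
    rw [tendsto_nhdsWithin_iff]
    constructor
    · simpa using ((continuous_add_left t₀).tendsto (0:ℝ)).mono_left
        nhdsWithin_le_nhds
    · filter_upwards [self_mem_nhdsWithin] with h hh
      simp only [Set.mem_compl_iff, Set.mem_singleton_iff] at hh ⊢
      intro hc; exact hh (by linarith)
  have h2 := (hasDerivAt_iff_tendsto_slope.mp h).comp hmap
  refine h2.congr fun h => ?_
  simp only [Function.comp_apply, slope_def_field]
  rw [div_eq_inv_mul]
  congr 1
  ring

lemma Dc_local {t₀ : ℝ} (h : t₀ ≠ 0) :
    ∃ J M, IsOpen J ∧ t₀ ∈ J ∧ ∀ t ∈ J, (⌈2 / t⌉₊ : ℕ) ≤ M := by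
  rcases h.lt_or_gt with hlt | hgt
  · refine ⟨Set.Iio 0, 0, isOpen_Iio, hlt, fun t ht => ?_⟩
    have : 2 / t ≤ 0 := div_nonpos_of_nonneg_of_nonpos (by norm_num) (le_of_lt ht)
    simp [Nat.ceil_eq_zero.mpr this]
  · refine ⟨Set.Ioi (t₀/2), ⌈4 / t₀⌉₊, isOpen_Ioi, by simpa using by linarith, fun t ht => ?_⟩
    have ht' : t₀/2 < t := ht
    have h2 : 2 / t ≤ 4 / t₀ := by
      rw [div_le_div_iff₀ (by linarith) hgt]
      nlinarith
    exact Nat.ceil_mono h2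

variable {E : Type*} [AddCommGroup E] [Module ℝ E] [TopologicalSpace E]
  [IsTopologicalAddGroup E] [ContinuousSMul ℝ E]

lemma Dc_contAt (y : ℕ → E) (k : ℕ) {t₀ : ℝ} (h : t₀ ≠ 0) : ContinuousAt (Dc y k) t₀ := by
  obtain ⟨J, M, hJopen, ht₀, hJ⟩ := Dc_local h
  have hcont : Continuous fun t => ∑ n ∈ Finset.range M, gco k n t • y n :=
    continuous_finset_sum _ fun n _ => (gco_cont k n).smul continuous_const
  refine hcont.continuousAt.congr ?_
  filter_upwards [hJopen.mem_nhds ht₀] with t ht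
  exact (Dc_eq_sum y k (hJ t ht)).symm

lemma Dc_derivAt_ne (y : ℕ → E) (k : ℕ) {t₀ : ℝ} (h : t₀ ≠ 0) :
    CurveDerivAt (Dc y k) (Dc y (k+1) t₀) t₀ := by
  obtain ⟨J, M, hJopen, ht₀, hJ⟩ := Dc_local h
  rw [CurveDerivAt]
  rw [Dc_eq_sum y (k+1) (hJ t₀ ht₀)]
  have hev : ∀ᶠ h : ℝ in 𝓝[≠] (0:ℝ),
      (∑ n ∈ Finset.range M, (h⁻¹ * (gco k n (t₀+h) - gco k n t₀)) • y n)
        = h⁻¹ • (Dc y k (t₀ + h) - Dc y k t₀) := by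
    have hct : ContinuousAt (fun h : ℝ => t₀ + h) 0 := by fun_prop
    have hmem : {h : ℝ | t₀ + h ∈ J} ∈ 𝓝 (0:ℝ) :=
      hct.preimage_mem_nhds (hJopen.mem_nhds (by simpa using ht₀))
    filter_upwards [nhdsWithin_le_nhds hmem] with h hh
    rw [Dc_eq_sum y k (hJ _ hh), Dc_eq_sum y k (hJ t₀ ht₀), ← Finset.sum_sub_distrib,
      Finset.smul_sum]
    refine Finset.sum_congr rfl fun n _ => ?_
    rw [← sub_smul, smul_smul]
  refine Filter.Tendsto.congr' hev ?_
  exact tendsto_finset_sum _ fun n _ =>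
    (quot_tendsto (gco_hasDerivAt k n t₀)).smul_const (y n)

lemma est (k : ℕ) {ε : ℝ} (hε : 0 < ε) :
    ∃ δ > 0, ∀ t : ℝ, 0 < t → t < δ → ∀ n, gco k n t ≠ 0 →
      |gco k n t| * μc n ≤ ε ∧ |gco k n t| * μc n ≤ ε * t := by
  obtain ⟨C, hC0, hC⟩ := Ψ_bound k
  have htend : Filter.Tendsto (fun n : ℕ => (C * 4^(k+1)) * (1/2:ℝ)^n)
      Filter.atTop (𝓝 0) := by
    have := tendsto_pow_atTop_nhds_zero_of_lt_one (by norm_num : (0:ℝ) ≤ 1/2)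
      (by norm_num : (1/2:ℝ) < 1)
    simpa using this.const_mul (C * 4^(k+1))
  obtain ⟨N₁, hN₁⟩ := Filter.eventually_atTop.mp (htend.eventually (gt_mem_nhds hε))
  set N₀ := max N₁ (k+2) with hN₀
  refine ⟨3 / (4 * 2^N₀), by positivity, fun t ht htδ n hne => ?_⟩
  obtain ⟨h3, h5⟩ := gco_mem k n hne
  have hpn : (0:ℝ) < 2^n := by positivity
  have hn_gt : N₀ < n := by
    by_contra hcon
    push_neg at hcon
    have hle : (2:ℝ)^n ≤ 2^N₀ := pow_le_pow_right₀ one_le_two hcon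
    have ht' : 3 / (4 * 2^n) ≤ t := by
      rw [div_le_iff₀ (by positivity)]
      nlinarith
    have h4 : (3:ℝ) / (4 * 2^N₀) ≤ 3 / (4*2^n) := by
      gcongr
    exact absurd (htδ.trans_le (h4.trans ht')) (lt_irrefl t)
  have hnk : k + 2 ≤ n := le_trans (le_max_right _ _) hn_gt.le
  have hn1 : N₁ ≤ n := le_trans (le_max_left _ _) hn_gt.le
  have hg : |gco k n t| ≤ (4 * 2^n)^k * C := by
    rw [gco, abs_mul, abs_of_nonneg (by positivity)]
    exact mul_le_mul_of_nonneg_left (hC _) (by positivity)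
  have hA : ((4 * 2^n :ℝ))^(k+1) * C * μc n ≤ (C * 4^(k+1)) * (1/2)^n := by
    have hkey : (2:ℝ)^(n*(k+1)) * 2^n ≤ 2^(n*n) := by
      rw [← pow_add]
      apply pow_le_pow_right₀ one_le_two
      nlinarith
    have h2 : (2:ℝ)^(n*(k+1)) / 2^(n*n) ≤ 1 / 2^n := by
      rw [div_le_div_iff₀ (by positivity) (by positivity)]
      simpa using hkey
    calc ((4 * 2^n :ℝ))^(k+1) * C * μc n
        = (C*4^(k+1)) * ((2:ℝ)^(n*(k+1))/2^(n*n)) := by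
          rw [μc, mul_pow, ← pow_mul]; ring
      _ ≤ (C*4^(k+1)) * (1/2^n) := by
          exact mul_le_mul_of_nonneg_left h2 (by positivity)
      _ = (C*4^(k+1)) * (1/2)^n := by rw [div_pow, one_pow]
  have hβ : ((4 * 2^n :ℝ))^(k+1) * C * μc n < ε := lt_of_le_of_lt hA (hN₁ n hn1)
  have hP : (0:ℝ) < 4 * 2^n := by positivity
  have hμ := μc_pos n
  have h1 : |gco k n t| * μc n * (4*2^n) ≤ ((4 * 2^n:ℝ))^(k+1) * C * μc n := by
    calc |gco k n t| * μc n * (4*2^n) ≤ ((4*2^n:ℝ)^k * C) * μc n * (4*2^n) := by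
          gcongr
      _ = ((4 * 2^n:ℝ))^(k+1) * C * μc n := by ring
  have hnn : 0 ≤ |gco k n t| * μc n := mul_nonneg (abs_nonneg _) hμ.le
  have h4P : (1:ℝ) ≤ 4 * 2^n := by
    have := pow_le_pow_right₀ (one_le_two : (1:ℝ) ≤ 2) (Nat.zero_le n)
    rw [pow_zero] at this
    linarith
  constructor
  · have := mul_le_mul_of_nonneg_left h4P hnn
    rw [mul_one] at this
    linarith
  · have h2 : |gco k n t| * μc n ≤ ε / (4*2^n) := by
      rw [le_div_iff₀ hP]
      linarith
    have h3 : ε / (4*2^n) ≤ ε * t := by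
      rw [div_le_iff₀ hP]
      nlinarith
    linarith

end Analysis

section Final

open Filter Topology Set Bornology

variable {E : Type*} [AddCommGroup E] [Module ℝ E] [TopologicalSpace E]
  [IsTopologicalAddGroup E] [ContinuousSMul ℝ E]

lemma Dc_tendsto_zero (B : Set E) (hB : IsVonNBounded ℝ B) (b : ℕ → E)
    (hb : ∀ n, b n ∈ B) (k : ℕ) {V : Set E} (hV : V ∈ 𝓝 (0:E)) :
    ∀ᶠ t : ℝ in 𝓝 0, Dc (fun n => μc n • b n) k t ∈ V ∧
      t⁻¹ • Dc (fun n => μc n • b n) k t ∈ V := by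
  set W := balancedCore ℝ V with hWdef
  have hWmem : W ∈ 𝓝 (0:E) := balancedCore_mem_nhds_zero hV
  have hWbal : Balanced ℝ W := balancedCore_balanced V
  have hWV : W ⊆ V := balancedCore_subset V
  have hW0 : (0:E) ∈ W := mem_of_mem_nhds hWmem
  obtain ⟨r, hr, habs⟩ := (hB hWmem).exists_pos
  set c := max r 1 with hc
  have hc1 : (1:ℝ) ≤ c := le_max_right _ _
  have hcB : B ⊆ c • W := habs c
    (by rw [Real.norm_eq_abs, abs_of_pos (by linarith)]; exact le_max_left _ _)
  have hεpos : (0:ℝ) < c⁻¹ := by positivity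
  obtain ⟨δ, hδ, hest⟩ := est k hεpos
  have hball : Metric.ball (0:ℝ) δ ∈ 𝓝 (0:ℝ) := Metric.ball_mem_nhds 0 hδ
  have key : ∀ (a : ℝ) (n : ℕ), |a| ≤ c⁻¹ → a • b n ∈ W := by
    intro a n ha
    obtain ⟨w, hw, hbw⟩ := hcB (hb n)
    rw [← hbw, smul_smul]
    refine hWbal (a * c) ?_ (Set.smul_mem_smul_set hw)
    rw [Real.norm_eq_abs, abs_mul, abs_of_pos (by linarith : (0:ℝ) < c)]
    calc |a| * c ≤ c⁻¹ * c := by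
          exact mul_le_mul_of_nonneg_right ha (by linarith)
      _ = 1 := inv_mul_cancel₀ (by linarith)
  filter_upwards [hball] with t ht
  rw [Metric.mem_ball, Real.dist_eq, sub_zero] at ht
  rcases le_or_gt t 0 with ht0 | ht0
  · rw [Dc_nonpos _ k ht0, smul_zero]
    exact ⟨hWV hW0, hWV hW0⟩
  · rcases Dc_single (fun n => μc n • b n) k t with h0 | ⟨n, hne, heq⟩
    · rw [h0, smul_zero]; exact ⟨hWV hW0, hWV hW0⟩
    · obtain ⟨hb1, hb2⟩ := hest t ht0 (by rwa [abs_of_pos ht0] at ht) n hne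
      have heq' : Dc (fun n => μc n • b n) k t = (gco k n t * μc n) • b n := by
        rw [heq, smul_smul]
      constructor
      · rw [heq']
        refine hWV (key _ n ?_)
        rw [abs_mul, abs_of_pos (μc_pos n)]
        exact hb1
      · rw [heq', smul_smul]
        refine hWV (key _ n ?_)
        rw [abs_mul, abs_mul, abs_of_pos (μc_pos n), abs_inv, abs_of_pos ht0]
        have h1 := mul_le_mul_of_nonneg_left hb2 (inv_nonneg.mpr ht0.le)
        have h2 : t⁻¹ * (c⁻¹ * t) = c⁻¹ := by field_simp
        rw [h2] at h1
        exact h1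
  
lemma Dc_smooth (B : Set E) (hB : IsVonNBounded ℝ B) (b : ℕ → E) (hb : ∀ n, b n ∈ B) :
    IsSmoothCurve (Dc (fun n => μc n • b n) 0) := by
  set y := fun n => μc n • b n with hy
  refine ⟨Dc y, rfl, fun k t => ?_, fun k => ?_⟩
  · rcases eq_or_ne t 0 with rfl | hne
    · rw [CurveDerivAt, Dc_zero y (k+1)]
      rw [Filter.tendsto_def]
      intro V hV
      have hev := Dc_tendsto_zero B hB b hb k hV
      filter_upwards [nhdsWithin_le_nhds hev] with h hh
      simpa [Dc_zero] using hh.2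
    · exact Dc_derivAt_ne y k hne
  · rw [continuous_iff_continuousAt]
    intro t₀
    rcases eq_or_ne t₀ 0 with rfl | hne
    · rw [ContinuousAt, Dc_zero, Filter.tendsto_def]
      intro V hV
      filter_upwards [Dc_tendsto_zero B hB b hb k hV] with t htV
      exact htV.1
    · exact Dc_contAt y k hne

end Final

theorem cInf_open_absorbs_bounded {E : Type*} [AddCommGroup E] [Module ℝ E] [TopologicalSpace E]
    [IsTopologicalAddGroup E] [ContinuousSMul ℝ E] [LocallyConvexSpace ℝ E] [T2Space E] (U : Set E)
    (h0 : (0 : E) ∈ U) (hUc : AbsolutelyConvex U)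
    (hU : @IsOpen E (cInfTopology E) U) (B : Set E)
    (hB : Bornology.IsVonNBounded ℝ B) :
    ∃ r : ℝ, 0 < r ∧ B ⊆ r • U := by
  by_contra hcon
  push_neg at hcon
  have hpick : ∀ n : ℕ, ∃ x ∈ B, x ∉ ((μc n)⁻¹) • U := by
    intro n
    have h1 := hcon (μc n)⁻¹ (by have := μc_pos n; positivity)
    exact Set.not_subset.mp h1
  choose b hbB hbU using hpick
  set y := fun n => μc n • b n with hy
  have hsmooth : IsSmoothCurve (Dc y 0) := Dc_smooth B hB b hbB
  have hopen : IsOpen ((Dc y 0) ⁻¹' U) := by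
    rw [cInfTopology] at hU
    have h2 := (isOpen_iSup_iff).mp hU ⟨Dc y 0, hsmooth⟩
    exact isOpen_coinduced.mp h2
  have h0mem : (0:ℝ) ∈ (Dc y 0) ⁻¹' U := by
    simp only [Set.mem_preimage, Dc_zero]
    exact h0
  obtain ⟨ε, hε, hballU⟩ := Metric.isOpen_iff.mp hopen 0 h0mem
  obtain ⟨m, hm⟩ := exists_pow_lt_of_lt_one hε (by norm_num : (1/2:ℝ) < 1)
  have hmem : ((2:ℝ)^m)⁻¹ ∈ Metric.ball (0:ℝ) ε := by
    rw [Metric.mem_ball, Real.dist_eq, sub_zero, abs_of_pos (by positivity)]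
    calc ((2:ℝ)^m)⁻¹ = (1/2)^m := by rw [one_div, inv_pow]
      _ < ε := hm
  have hUm : Dc y 0 (((2:ℝ)^m)⁻¹) ∈ U := hballU hmem
  rw [Dc_value y m] at hUm
  refine hbU m ⟨μc m • b m, hUm, ?_⟩
  show (μc m)⁻¹ • (μc m • b m) = b m
  rw [smul_smul, inv_mul_cancel₀ (μc_pos m).ne', one_smul]
end

section
/- Let E be a metrizable locally convex space (e.g., a Fréchet space) and U an absolutely convex subset of E containing 0 which absorbs every bounded subset of E. Then U is a neighborhood of 0 in the given topology. -/
open Filter Topology Set Bornology Pointwise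

universe u v

theorem bornivorous_is_neighborhood {E : Type*} [AddCommGroup E] [Module ℝ E]
    [TopologicalSpace E] [IsTopologicalAddGroup E] [ContinuousSMul ℝ E]
    [LocallyConvexSpace ℝ E] [TopologicalSpace.MetrizableSpace E] (U : Set E)
    (h0 : (0 : E) ∈ U) (hUc : AbsolutelyConvex U)
    (habs : ∀ B : Set E, Bornology.IsVonNBounded ℝ B → ∃ r : ℝ, 0 < r ∧ B ⊆ r • U) :
    U ∈ nhds (0 : E) := by
  by_contra hU
  letI := TopologicalSpace.metrizableSpaceMetric E
  obtain ⟨V, hV⟩ := (𝓝 (0 : E)).exists_antitone_basis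
  have hx : ∀ n : ℕ, ∃ x, x ∈ ((n : ℝ) + 1)⁻¹ • V n ∧ x ∉ U := by
    intro n
    by_contra hc
    push_neg at hc
    apply hU
    have hmem : ((n : ℝ) + 1)⁻¹ • V n ∈ 𝓝 (0 : E) := by
      have := (hV.mem n)
      exact (set_smul_mem_nhds_zero_iff (c := ((n : ℝ) + 1)⁻¹)
        (by positivity)).2 this
    exact Filter.mem_of_superset hmem hc
  choose x hx1 hx2 using hx
  set y : ℕ → E := fun n => ((n : ℝ) + 1) • x n with hy
  have hyV : ∀ n, y n ∈ V n := by
    intro n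
    obtain ⟨v, hv, hxv⟩ := hx1 n
    rw [hy]; simp only
    rw [← hxv, smul_smul]
    have : ((n : ℝ) + 1) * ((n : ℝ) + 1)⁻¹ = 1 := by
      field_simp
    rw [this, one_smul]; exact hv
  have hytend : Tendsto y atTop (𝓝 (0 : E)) := by
    rw [hV.1.tendsto_right_iff]
    intro n _
    filter_upwards [eventually_ge_atTop n] with m hm
    exact hV.antitone hm (hyV m)
  have hb : IsVonNBounded ℝ (Set.range y) := hytend.isVonNBounded_range (𝕜 := ℝ)
  obtain ⟨r, hr, hrU⟩ := habs _ hb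
  obtain ⟨n, hn⟩ := exists_nat_gt r
  have hyU : y n ∈ r • U := hrU ⟨n, rfl⟩
  obtain ⟨u, hu, huy⟩ := hyU
  simp only at huy
  apply hx2 n
  have : x n = (((n : ℝ) + 1)⁻¹ * r) • u := by
    rw [mul_smul, huy, hy, inv_smul_smul₀ (by positivity)]
  rw [this]
  refine hUc.2 _ ?_ (smul_mem_smul_set hu)
  rw [Real.norm_eq_abs, abs_of_nonneg (by positivity)]
  rw [inv_mul_le_iff₀ (by positivity)]
  nlinarith
end
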